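/- arXiv:1105.2202 — 6 statements merged into one kernel-verified Lean document; each statement's English description precedes it below -/
import Mathlib

section
/- For every graph G on n vertices and every graph H, the corona satisfies I(G ∘ H; x) = (I(H;x))^n · I(G; x / I(H;x)), interpreted as a polynomial identity. -/
open Polynomial

open scoped Classical in
/-- The independence polynomial of a finite simple graph. -/
noncomputable def indepPoly {V : Type*} [Fintype V] (G : SimpleGraph V) : Polynomial ℤ :=
  ∑ s : Finset V, if (s : Set V).Pairwise (fun u v => ¬ G.Adj u v) then X ^ s.card else 0

/-- Corona of two graphs. -/
def corona {V W : Type*} (G : SimpleGraph V) (H : SimpleGraph W) : SimpleGraph (V ⊕ V × W) where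
  Adj x y :=
    match x, y with
    | .inl u, .inl v => G.Adj u v
    | .inl u, .inr (v, _) => u = v
    | .inr (v, _), .inl u => u = v
    | .inr (u, a), .inr (v, b) => u = v ∧ H.Adj a b
  symm := by
    constructor
    rintro (u | ⟨u, a⟩) (v | ⟨v, b⟩) h
    · exact G.adj_symm h
    · exact h
    · exact h
    · exact ⟨h.1.symm, h.2.symm⟩
  loopless := by
    constructor
    rintro (u | ⟨u, a⟩) h
    · exact G.irrefl h
    · exact H.irrefl h.2

set_option linter.unusedSectionVars false

section
open Finset
open scoped Classical

variable {V W : Type*} [Fintype V] [Fintype W]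

def Ind {α : Type*} (G : SimpleGraph α) (s : Finset α) : Prop :=
  (s : Set α).Pairwise fun u v => ¬ G.Adj u v

lemma indepPoly_eq {α : Type*} [Fintype α] (G : SimpleGraph α) :
    indepPoly G = ∑ s : Finset α, if Ind G s then (X : ℤ[X]) ^ s.card else 0 := by
  rw [indepPoly]
  refine Finset.sum_congr rfl fun s _ => ?_
  rcases em (Ind G s) with h | h
  · rw [if_pos h, if_pos (show (s : Set α).Pairwise fun u v => ¬ G.Adj u v from h)]
  · rw [if_neg h, if_neg (show ¬ (s : Set α).Pairwise fun u v => ¬ G.Adj u v from h)]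

noncomputable def Rf (f : V → Finset W) : Finset (V × W) :=
  Finset.univ.biUnion fun v => (f v).map ⟨Prod.mk v, Prod.mk_right_injective v⟩

lemma mem_Rf (f : V → Finset W) (p : V × W) : p ∈ Rf f ↔ p.2 ∈ f p.1 := by
  obtain ⟨v, w⟩ := p
  simp [Rf]

lemma card_Rf (f : V → Finset W) : (Rf f).card = ∑ v, (f v).card := by
  rw [Rf, Finset.card_biUnion]
  · simp
  · intro x _ y _ hxy
    refine Finset.disjoint_left.2 ?_
    rintro ⟨a, b⟩ ha hb
    simp at ha hb
    exact hxy (ha.2.trans hb.2.symm)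

lemma ind_disjSum (G : SimpleGraph V) (H : SimpleGraph W) (A : Finset V) (f : V → Finset W) :
    Ind (corona G H) (A.disjSum (Rf f)) ↔
      Ind G A ∧ ∀ v, (v ∈ A → f v = ∅) ∧ Ind H (f v) := by
  constructor
  · intro h
    refine ⟨?_, fun v => ⟨?_, ?_⟩⟩
    · intro u hu v hv huv hadj
      exact h (x := Sum.inl u) (y := Sum.inl v) (by simpa using hu) (by simpa using hv)
        (by simpa using huv) hadj
    · intro hv
      by_contra hne
      obtain ⟨w, hw⟩ := Finset.nonempty_iff_ne_empty.2 hne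
      exact h (x := Sum.inl v) (y := Sum.inr (v, w))
        (by simpa using hv) (by simp [mem_Rf, hw]) (by simp) rfl
    · intro a ha b hb hab hadj
      exact h (x := Sum.inr (v, a)) (y := Sum.inr (v, b))
        (by simp [mem_Rf]; exact ha) (by simp [mem_Rf]; exact hb)
        (by simp [hab]) ⟨rfl, hadj⟩
  · rintro ⟨hA, hf⟩
    rintro (u | ⟨u, a⟩) hx (v | ⟨v, b⟩) hy hxy hadj
    · exact hA (by simpa using hx) (by simpa using hy) (by simpa using hxy) hadj
    · simp only [Finset.mem_coe, Finset.inl_mem_disjSum, Finset.inr_mem_disjSum] at hx hy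
      rw [mem_Rf] at hy
      have : u = v := hadj
      subst this
      have := (hf u).1 hx
      rw [this] at hy
      exact absurd hy (Finset.notMem_empty b)
    · simp only [Finset.mem_coe, Finset.inl_mem_disjSum, Finset.inr_mem_disjSum] at hx hy
      rw [mem_Rf] at hx
      have : v = u := hadj
      subst this
      have := (hf v).1 hy
      rw [this] at hx
      exact absurd hx (Finset.notMem_empty a)
    · obtain ⟨rfl, hadj'⟩ := hadj
      simp only [Finset.mem_coe, Finset.inr_mem_disjSum] at hx hy
      rw [mem_Rf] at hx hy
      have hab : a ≠ b := by rintro rfl; exact hxy rfl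
      exact (hf u).2 hx hy hab hadj'

lemma term_eq (G : SimpleGraph V) (H : SimpleGraph W) (A : Finset V) (f : V → Finset W) :
    (if Ind (corona G H) (A.disjSum (Rf f)) then (X : ℤ[X]) ^ (A.disjSum (Rf f)).card else 0)
    = (if Ind G A then (X : ℤ[X]) ^ A.card else 0) *
      ∏ v, (if (v ∈ A → f v = ∅) ∧ Ind H (f v) then (X : ℤ[X]) ^ (f v).card else 0) := by
  rw [Finset.card_disjSum, card_Rf]
  by_cases hA : Ind G A
  · by_cases hf : ∀ v, (v ∈ A → f v = ∅) ∧ Ind H (f v)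
    · rw [if_pos ((ind_disjSum G H A f).2 ⟨hA, hf⟩), if_pos hA, pow_add]
      congr 1
      rw [← Finset.prod_pow_eq_pow_sum]
      exact Finset.prod_congr rfl fun v _ => (if_pos (hf v)).symm
    · have h2 : ∏ w, (if (w ∈ A → f w = ∅) ∧ Ind H (f w) then (X : ℤ[X]) ^ (f w).card else 0)
          = 0 := by
        obtain ⟨v, hv⟩ := not_forall.1 hf
        exact Finset.prod_eq_zero (Finset.mem_univ v) (if_neg hv)
      rw [h2, mul_zero, if_neg]
      rw [ind_disjSum]
      exact fun h => hf h.2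
  · rw [if_neg hA, zero_mul, if_neg]
    rw [ind_disjSum]
    tauto

lemma corona_inner_sum (H : SimpleGraph W) (A : Finset V) (v : V) :
    ∑ t : Finset W, (if (v ∈ A → t = ∅) ∧ Ind H t then (X : ℤ[X]) ^ t.card else 0)
    = if v ∈ A then 1 else indepPoly H := by
  by_cases hv : v ∈ A
  · rw [if_pos hv, Finset.sum_eq_single ∅]
    · simp [Ind]
    · intro t _ ht
      rw [if_neg]
      rintro ⟨h1, -⟩
      exact ht (h1 hv)
    · simp
  · rw [if_neg hv]
    simp only [hv, false_implies, true_and]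
    rw [indepPoly_eq]

lemma step1 (G : SimpleGraph V) (H : SimpleGraph W) :
    indepPoly (corona G H) =
      ∑ A : Finset V, (if Ind G A then (X : ℤ[X]) ^ A.card else 0) *
        indepPoly H ^ (Fintype.card V - A.card) := by
  rw [indepPoly_eq]
  have hbij : Function.Bijective (fun p : Finset V × (V → Finset W) =>
      p.1.disjSum (Rf p.2)) := by
    rw [Function.bijective_iff_has_inverse]
    refine ⟨fun s => (s.toLeft, fun v => Finset.univ.filter fun w => Sum.inr (v, w) ∈ s),
      ?_, ?_⟩
    · rintro ⟨A, f⟩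
      refine Prod.ext ?_ ?_
      · simp
      · funext v; ext w; simp [mem_Rf]
    · intro s
      ext x
      rcases x with u | ⟨v, w⟩ <;> simp [mem_Rf]
  rw [show (∑ s : Finset (V ⊕ V × W),
        if Ind (corona G H) s then (X : ℤ[X]) ^ s.card else 0)
      = ∑ p : Finset V × (V → Finset W),
        (if Ind (corona G H) (p.1.disjSum (Rf p.2)) then
          (X : ℤ[X]) ^ (p.1.disjSum (Rf p.2)).card else 0) from
    (Fintype.sum_bijective _ hbij _ _ (fun p => rfl)).symm]
  rw [Fintype.sum_prod_type]
  refine Finset.sum_congr rfl fun A _ => ?_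
  calc (∑ f : V → Finset W,
          if Ind (corona G H) (A.disjSum (Rf f)) then
            (X : ℤ[X]) ^ (A.disjSum (Rf f)).card else 0)
      = ∑ f : V → Finset W, (if Ind G A then (X : ℤ[X]) ^ A.card else 0) *
          ∏ v, (if (v ∈ A → f v = ∅) ∧ Ind H (f v) then (X : ℤ[X]) ^ (f v).card else 0) :=
        Finset.sum_congr rfl fun f _ => term_eq G H A f
    _ = (if Ind G A then (X : ℤ[X]) ^ A.card else 0) *
          ∑ f : V → Finset W,
            ∏ v, (if (v ∈ A → f v = ∅) ∧ Ind H (f v) then (X : ℤ[X]) ^ (f v).card else 0) := by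
        rw [Finset.mul_sum]
    _ = (if Ind G A then (X : ℤ[X]) ^ A.card else 0) *
          ∏ v, ∑ t : Finset W,
            (if (v ∈ A → t = ∅) ∧ Ind H t then (X : ℤ[X]) ^ t.card else 0) := by
        rw [Fintype.prod_sum]
    _ = (if Ind G A then (X : ℤ[X]) ^ A.card else 0) *
          ∏ v, (if v ∈ A then 1 else indepPoly H) := by
        rw [Finset.prod_congr rfl fun v _ => corona_inner_sum H A v]
    _ = (if Ind G A then (X : ℤ[X]) ^ A.card else 0) *
          indepPoly H ^ (Fintype.card V - A.card) := by
        congr 1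
        rw [Finset.prod_ite, Finset.prod_const_one, one_mul, Finset.prod_const]
        have hfilter : Finset.univ.filter (fun v => ¬ v ∈ A) = Aᶜ := by
          ext v; simp
        rw [hfilter, Finset.card_compl]

lemma coeff_indepPoly (G : SimpleGraph V) (k : ℕ) :
    (indepPoly G).coeff k = ∑ A : Finset V, if Ind G A ∧ A.card = k then 1 else 0 := by
  rw [indepPoly_eq, Polynomial.finset_sum_coeff]
  refine Finset.sum_congr rfl fun A _ => ?_
  rw [apply_ite (fun p : ℤ[X] => p.coeff k), Polynomial.coeff_zero, Polynomial.coeff_X_pow]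
  by_cases h : Ind G A
  · rw [if_pos h]
    by_cases h2 : A.card = k
    · rw [if_pos (h2 ▸ rfl), if_pos ⟨h, h2⟩]
    · rw [if_neg (fun hk : k = A.card => h2 hk.symm), if_neg (by tauto)]
  · rw [if_neg h, if_neg (by tauto)]

theorem corona_indepPoly' (G : SimpleGraph V) (H : SimpleGraph W) :
    indepPoly (corona G H) =
      ∑ k ∈ Finset.range (Fintype.card V + 1),
        C ((indepPoly G).coeff k) * X ^ k * indepPoly H ^ (Fintype.card V - k) := by
  rw [step1 G H]
  have hR : ∀ k, C ((indepPoly G).coeff k) * X ^ k * indepPoly H ^ (Fintype.card V - k)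
      = ∑ A : Finset V, (if Ind G A ∧ A.card = k then
          (X : ℤ[X]) ^ k * indepPoly H ^ (Fintype.card V - k) else 0) := by
    intro k
    rw [coeff_indepPoly, map_sum, Finset.sum_mul, Finset.sum_mul]
    refine Finset.sum_congr rfl fun A _ => ?_
    by_cases h : Ind G A ∧ A.card = k <;> simp [h]
  rw [Finset.sum_congr rfl fun k _ => hR k, Finset.sum_comm]
  refine Finset.sum_congr rfl fun A _ => ?_
  by_cases hA : Ind G A
  · rw [if_pos hA]
    simp only [hA, true_and]
    rw [Finset.sum_ite_eq (Finset.range (Fintype.card V + 1)) A.card]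
    rw [if_pos (Finset.mem_range.2 (Nat.lt_succ_of_le (by
      simpa using Finset.card_le_univ A)))]
  · rw [if_neg hA, zero_mul]
    simp [hA]
end

theorem corona_indepPoly {V W : Type*} [Fintype V] [Fintype W]
    (G : SimpleGraph V) (H : SimpleGraph W) :
    indepPoly (corona G H) =
      ∑ k ∈ Finset.range (Fintype.card V + 1),
        C ((indepPoly G).coeff k) * X ^ k * indepPoly H ^ (Fintype.card V - k) :=
  corona_indepPoly' G H
end

section
/- If S is an independent set of a graph G such that |N(A) ∩ S| = 2|A| holds for every independent set A ⊆ V(G) \ S, then the independence polynomial I(G;x) is symmetric. -/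
open Polynomial

/-- A polynomial is palindromic (symmetric). -/
def IsPalindromic (p : Polynomial ℤ) : Prop :=
  ∀ j ≤ p.natDegree, p.coeff j = p.coeff (p.natDegree - j)

open scoped Classical in
theorem stevanovic_symmetry {V : Type*} [Fintype V] (G : SimpleGraph V) (S : Finset V)
    (hS : (S : Set V).Pairwise fun u v => ¬ G.Adj u v)
    (h : ∀ A : Finset V, (A : Set V).Pairwise (fun u v => ¬ G.Adj u v) →
      (∀ a ∈ A, a ∉ S) →
      (S.filter fun s => ∃ a ∈ A, G.Adj a s).card = 2 * A.card) :
    IsPalindromic (indepPoly G) := by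
  classical
  set n := S.card with hn
  set Ind : Finset V → Prop := fun s => (s : Set V).Pairwise fun u v => ¬ G.Adj u v with hInd
  set NS : Finset V → Finset V := fun A => S.filter fun s => ∃ a ∈ A, G.Adj a s with hNSdef
  -- coefficient formula
  have hcoeff : ∀ j, (indepPoly G).coeff j
      = ((Finset.univ.filter fun s : Finset V => Ind s ∧ s.card = j).card : ℤ) := by
    intro j
    simp only [indepPoly, Polynomial.finset_sum_coeff]
    rw [Finset.card_filter]
    push_cast
    refine Finset.sum_congr rfl fun s _ => ?_
    simp only [hInd]
    by_cases hI : (↑s : Set V).Pairwise fun u v => ¬ G.Adj u v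
    · by_cases hc : s.card = j
      · simp [hI, hc, Polynomial.coeff_X_pow]
      · simp [hI, hc, Polynomial.coeff_X_pow, Ne.symm hc]
    · simp [hI]
  -- subsets of S are independent
  have hIndS : ∀ T ⊆ S, Ind T := fun T hT => hS.mono (by exact_mod_cast hT)
  have hNSsub : ∀ A, NS A ⊆ S := fun A => Finset.filter_subset _ _
  -- facts about an independent set I
  have key : ∀ I : Finset V, Ind I →
      (NS (I \ S)).card = 2 * (I \ S).card ∧ I ∩ S ⊆ S \ NS (I \ S) := by
    intro I hI
    have hIA : Ind (I \ S) := hI.mono (by exact_mod_cast Finset.sdiff_subset)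
    have hA := h (I \ S) hIA (fun a ha => (Finset.mem_sdiff.mp ha).2)
    refine ⟨hA, ?_⟩
    intro v hv
    rw [Finset.mem_inter] at hv
    rw [Finset.mem_sdiff]
    refine ⟨hv.2, ?_⟩
    intro hvNS
    rw [hNSdef, Finset.mem_filter] at hvNS
    obtain ⟨-, a, haA, hadj⟩ := hvNS
    have haI : a ∈ I := (Finset.mem_sdiff.mp haA).1
    have hne : a ≠ v := fun he => (Finset.mem_sdiff.mp haA).2 (he ▸ hv.2)
    exact hI haI hv.1 hne hadj
  set f : Finset V → Finset V := fun I => (I \ S) ∪ ((S \ NS (I \ S)) \ I) with hf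
  -- cardinality of f I
  have hcard : ∀ I : Finset V, Ind I → I.card ≤ n ∧ (f I).card = n - I.card := by
    intro I hI
    obtain ⟨hA, hsub⟩ := key I hI
    have h2a : 2 * (I \ S).card ≤ n := by
      rw [← hA]; exact Finset.card_le_card (hNSsub _)
    have hcardSdiff : (S \ NS (I \ S)).card = n - 2 * (I \ S).card := by
      rw [Finset.card_sdiff_of_subset (hNSsub _), hA]
    have hinter : (S \ NS (I \ S)) ∩ I = I ∩ S := by
      ext x
      simp only [Finset.mem_inter, Finset.mem_sdiff]
      constructor
      · rintro ⟨⟨hxS, -⟩, hxI⟩; exact ⟨hxI, hxS⟩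
      · intro hx
        have := hsub (Finset.mem_inter.mpr hx)
        rw [Finset.mem_sdiff] at this
        exact ⟨this, hx.1⟩
    have hT' : ((S \ NS (I \ S)) \ I).card = (n - 2 * (I \ S).card) - (I ∩ S).card := by
      have := Finset.card_sdiff_add_card_inter (S \ NS (I \ S)) I
      rw [hinter, hcardSdiff] at this
      omega
    have hIsplit : (I \ S).card + (I ∩ S).card = I.card :=
      Finset.card_sdiff_add_card_inter I S
    have htle : (I ∩ S).card ≤ n - 2 * (I \ S).card := by
      rw [← hcardSdiff]; exact Finset.card_le_card hsub
    have hdisj : Disjoint (I \ S) ((S \ NS (I \ S)) \ I) := by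
      refine Finset.disjoint_left.mpr fun x hx hx' => ?_
      rw [Finset.mem_sdiff] at hx
      rw [Finset.mem_sdiff, Finset.mem_sdiff] at hx'
      exact hx.2 hx'.1.1
    have hfc : (f I).card = (I \ S).card + ((S \ NS (I \ S)) \ I).card :=
      Finset.card_union_of_disjoint hdisj
    constructor
    · omega
    · rw [hfc, hT']; omega
  -- f I is independent
  have hfInd : ∀ I : Finset V, Ind I → Ind (f I) := by
    intro I hI
    obtain ⟨hA, hsub⟩ := key I hI
    intro u hu v hv hne hadj
    simp only [hf, Finset.coe_union, Set.mem_union, Finset.mem_coe] at hu hv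
    have hAInd : Ind (I \ S) := hI.mono (by exact_mod_cast Finset.sdiff_subset)
    have hmemNS : ∀ a ∈ I \ S, ∀ w ∈ S, w ∉ NS (I \ S) → ¬ G.Adj a w := by
      intro a ha w hw hwNS hadj'
      exact hwNS (by rw [hNSdef]; exact Finset.mem_filter.mpr ⟨hw, a, ha, hadj'⟩)
    rcases hu with hu | hu
    · rcases hv with hv | hv
      · exact hAInd (Finset.mem_coe.mpr hu) (Finset.mem_coe.mpr hv) hne hadj
      · obtain ⟨hv1, -⟩ := Finset.mem_sdiff.mp hv
        obtain ⟨hvS, hvNS⟩ := Finset.mem_sdiff.mp hv1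
        exact hmemNS u hu v hvS hvNS hadj
    · rcases hv with hv | hv
      · obtain ⟨hu1, -⟩ := Finset.mem_sdiff.mp hu
        obtain ⟨huS, huNS⟩ := Finset.mem_sdiff.mp hu1
        exact hmemNS v hv u huS huNS hadj.symm
      · have huS := (Finset.mem_sdiff.mp (Finset.mem_sdiff.mp hu).1).1
        have hvS := (Finset.mem_sdiff.mp (Finset.mem_sdiff.mp hv).1).1
        exact hS huS hvS hne hadj
  -- f is an involution on independent sets
  have hff : ∀ I : Finset V, Ind I → f (f I) = I := by
    intro I hI
    obtain ⟨hA, hsub⟩ := key I hI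
    have hfIdiff : f I \ S = I \ S := by
      ext x
      simp only [hf, Finset.mem_sdiff, Finset.mem_union]
      tauto
    have hstep : (S \ NS (I \ S)) \ f I = I ∩ S := by
      ext x
      constructor
      · intro hx
        obtain ⟨hx1, hx2⟩ := Finset.mem_sdiff.mp hx
        obtain ⟨hxS, hxNS⟩ := Finset.mem_sdiff.mp hx1
        have hxI : x ∈ I := by
          by_contra hxI
          exact hx2 (Finset.mem_union_right _ (Finset.mem_sdiff.mpr ⟨hx1, hxI⟩))
        exact Finset.mem_inter.mpr ⟨hxI, hxS⟩
      · intro hx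
        have hxs := hsub hx
        obtain ⟨hxI, hxS⟩ := Finset.mem_inter.mp hx
        refine Finset.mem_sdiff.mpr ⟨hxs, ?_⟩
        intro hc
        rcases Finset.mem_union.mp hc with hc | hc
        · exact (Finset.mem_sdiff.mp hc).2 hxS
        · exact (Finset.mem_sdiff.mp hc).2 hxI
    calc f (f I) = (f I \ S) ∪ ((S \ NS (f I \ S)) \ f I) := rfl
      _ = (I \ S) ∪ ((S \ NS (I \ S)) \ f I) := by rw [hfIdiff]
      _ = (I \ S) ∪ (I ∩ S) := by rw [hstep]
      _ = I := Finset.sdiff_union_inter I S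
  -- the counting bijection
  have hcount : ∀ j ≤ n,
      (Finset.univ.filter fun s : Finset V => Ind s ∧ s.card = j).card
      = (Finset.univ.filter fun s : Finset V => Ind s ∧ s.card = n - j).card := by
    intro j hj
    refine Finset.card_bij' (fun I _ => f I) (fun I _ => f I) ?_ ?_ ?_ ?_
    · intro I hI
      rw [Finset.mem_filter] at hI ⊢
      obtain ⟨-, hInd', hc⟩ := hI
      exact ⟨Finset.mem_univ _, hfInd I hInd', by rw [(hcard I hInd').2, hc]⟩
    · intro I hI
      rw [Finset.mem_filter] at hI ⊢
      obtain ⟨-, hInd', hc⟩ := hI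
      refine ⟨Finset.mem_univ _, hfInd I hInd', ?_⟩
      rw [(hcard I hInd').2, hc]
      omega
    · intro I hI
      rw [Finset.mem_filter] at hI
      exact hff I hI.2.1
    · intro I hI
      rw [Finset.mem_filter] at hI
      exact hff I hI.2.1
  -- degree computation
  have hdeg : (indepPoly G).natDegree = n := by
    have hle : (indepPoly G).natDegree ≤ n := by
      refine Polynomial.natDegree_le_iff_coeff_eq_zero.mpr fun j hjn => ?_
      rw [hcoeff j]
      norm_cast
      rw [Finset.card_eq_zero, Finset.filter_eq_empty_iff]
      rintro I - ⟨hIInd, hc⟩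
      have := (hcard I hIInd).1
      omega
    have hne : (indepPoly G).coeff n ≠ 0 := by
      rw [hcoeff n]
      have : S ∈ Finset.univ.filter fun s : Finset V => Ind s ∧ s.card = n :=
        Finset.mem_filter.mpr ⟨Finset.mem_univ _, hS, rfl⟩
      have hpos := Finset.card_pos.mpr ⟨S, this⟩
      positivity
    exact le_antisymm hle (Polynomial.le_natDegree_of_ne_zero hne)
  intro j hj
  rw [hdeg] at hj ⊢
  rw [hcoeff j, hcoeff (n - j), hcount j hj]
end

section
/- If A is a clique in a graph G, then for every graph H, I((G,A) ∘ H; x) = I(H;x)^{|A|−1} · I((G,A) + H; x). -/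
open Polynomial

/-- Partial corona `(G,A) ∘ H`: each vertex of `A` gets its own copy of `H`. -/
def partialCorona {V W : Type*} (G : SimpleGraph V) (A : Finset V) (H : SimpleGraph W) :
    SimpleGraph (V ⊕ A × W) where
  Adj x y :=
    match x, y with
    | .inl u, .inl v => G.Adj u v
    | .inl u, .inr (a, _) => u = ↑a
    | .inr (a, _), .inl u => u = ↑a
    | .inr (a, w), .inr (b, w') => a = b ∧ H.Adj w w'
  symm := by
    constructor
    rintro (u | ⟨a, w⟩) (v | ⟨b, w'⟩) h
    · exact G.adj_symm h
    · exact h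
    · exact h
    · exact ⟨h.1.symm, h.2.symm⟩
  loopless := by
    constructor
    rintro (u | ⟨a, w⟩) h
    · exact G.irrefl h
    · exact H.irrefl h.2

/-- Partial Zykov sum `(G,A) + H`: every vertex of `A` is joined to every vertex of `H`. -/
def partialZykovSum {V W : Type*} (G : SimpleGraph V) (A : Finset V) (H : SimpleGraph W) :
    SimpleGraph (V ⊕ W) where
  Adj x y :=
    match x, y with
    | .inl u, .inl v => G.Adj u v
    | .inl u, .inr _ => u ∈ A
    | .inr _, .inl u => u ∈ A
    | .inr a, .inr b => H.Adj a b
  symm := by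
    constructor
    rintro (u | a) (v | b) h
    · exact G.adj_symm h
    · exact h
    · exact h
    · exact H.adj_symm h
  loopless := by
    constructor
    rintro (u | a) h
    · exact G.irrefl h
    · exact H.irrefl h



open Polynomial

open scoped Classical

section Aux

variable {α β : Type*} [Fintype α] [Fintype β] {M : Type*} [AddCommMonoid M]

lemma sum_finset_sum_type (f : Finset (α ⊕ β) → M) :
    ∑ s : Finset (α ⊕ β), f s = ∑ t : Finset α, ∑ u : Finset β, f (t.disjSum u) := by
  have h1 : ∑ s : Finset (α ⊕ β), f s
      = ∑ p : Finset α × Finset β, f (p.1.disjSum p.2) := by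
    refine (Fintype.sum_bijective (fun p : Finset α × Finset β => p.1.disjSum p.2) ?_
      (fun p => f (p.1.disjSum p.2)) f (fun p => rfl)).symm
    constructor
    · intro p q h
      have h1 := congrArg Finset.toLeft h
      have h2 := congrArg Finset.toRight h
      simp only [Finset.toLeft_disjSum, Finset.toRight_disjSum] at h1 h2
      exact Prod.ext h1 h2
    · intro s
      exact ⟨(s.toLeft, s.toRight), s.toLeft_disjSum_toRight⟩
  rw [h1, Fintype.sum_prod_type]

noncomputable def fn2set (p : α → Finset β) : Finset (α × β) :=
  Finset.univ.filter (fun q => q.2 ∈ p q.1)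

lemma mem_fn2set (p : α → Finset β) (a : α) (b : β) : (a, b) ∈ fn2set p ↔ b ∈ p a := by
  simp [fn2set]

lemma sum_finset_prod_type [Fintype (α → Finset β)] (f : Finset (α × β) → M) :
    ∑ u : Finset (α × β), f u = ∑ p : α → Finset β, f (fn2set p) := by
  refine (Fintype.sum_bijective fn2set ?_ (fun p => f (fn2set p)) f (fun p => rfl)).symm
  constructor
  · intro p q h
    funext a
    ext b
    rw [← mem_fn2set p a b, ← mem_fn2set q a b, h]
  · intro u
    refine ⟨fun a => Finset.univ.filter (fun b => (a, b) ∈ u), ?_⟩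
    ext ⟨a, b⟩
    simp [fn2set]

lemma card_fn2set (p : α → Finset β) : (fn2set p).card = ∑ a, (p a).card := by
  rw [Finset.card_eq_sum_card_fiberwise (f := Prod.fst) (t := Finset.univ)
    (fun x _ => Finset.mem_univ _)]
  refine Finset.sum_congr rfl fun a _ => ?_
  have : Finset.filter (fun x => x.1 = a) (fn2set p)
      = (p a).map ⟨fun b => (a, b), fun x y h => (Prod.mk.injEq _ _ _ _ ▸ h).2⟩ := by
    ext ⟨c, b⟩
    simp only [Finset.mem_filter, mem_fn2set, Finset.mem_map, Function.Embedding.coeFn_mk,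
      fn2set, Finset.mem_filter, Finset.mem_univ, true_and]
    constructor
    · rintro ⟨hb, rfl⟩; exact ⟨b, hb, rfl⟩
    · rintro ⟨b', hb', h⟩; cases h; exact ⟨hb', rfl⟩
  rw [this, Finset.card_map]

end Aux
section Aux2

variable {W : Type*} [Fintype W]

lemma ite_congr_inst {P Q : Prop} {i1 : Decidable P} {i2 : Decidable Q} {a b : Polynomial ℤ}
    (h : P ↔ Q) : @ite _ P i1 a b = @ite _ Q i2 a b := by
  have hpq := propext h
  subst hpq
  rw [Subsingleton.elim i1 i2]

lemma indepPoly_def {α : Type*} [Fintype α] (G' : SimpleGraph α)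
    [∀ s : Finset α, Decidable ((s : Set α).Pairwise fun u v => ¬ G'.Adj u v)] :
    indepPoly G' = ∑ s : Finset α,
      (if (s : Set α).Pairwise (fun u v => ¬ G'.Adj u v) then (X : Polynomial ℤ) ^ s.card else 0) := by
  unfold indepPoly
  exact Finset.sum_congr rfl fun s _ => ite_congr_inst Iff.rfl

lemma innerSum (H : SimpleGraph W) (Q : Prop) [Decidable Q]
    [∀ g : Finset W, Decidable (((g : Set W).Pairwise fun u v => ¬ H.Adj u v) ∧ (Q → g = ∅))] :
    ∑ g : Finset W, (if ((g : Set W).Pairwise (fun u v => ¬ H.Adj u v) ∧ (Q → g = ∅))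
      then (X : Polynomial ℤ) ^ g.card else 0) = if Q then 1 else indepPoly H := by
  by_cases hQ : Q
  · rw [if_pos hQ]
    rw [Finset.sum_eq_single (∅ : Finset W)]
    · rw [if_pos ⟨by simp, fun _ => rfl⟩, Finset.card_empty, pow_zero]
    · intro g _ hg
      rw [if_neg]
      rintro ⟨-, h⟩
      exact hg (h hQ)
    · simp
  · rw [if_neg hQ, indepPoly_def]
    refine Finset.sum_congr rfl fun g _ => ite_congr_inst ?_
    exact ⟨fun h => h.1, fun h => ⟨h, fun hq => absurd hq hQ⟩⟩

lemma split_ite {ι : Type*} [Fintype ι] (P : Prop) (Q : ι → Prop) (n : ℕ) (m : ι → ℕ)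
    [Decidable P] [∀ i, Decidable (Q i)] [Decidable (P ∧ ∀ i, Q i)] :
    (if (P ∧ ∀ i, Q i) then (X : Polynomial ℤ) ^ (n + ∑ i, m i) else 0)
      = (if P then (X : Polynomial ℤ) ^ n else 0)
          * ∏ i, (if Q i then (X : Polynomial ℤ) ^ (m i) else 0) := by
  by_cases hP : P
  · by_cases hq : ∀ i, Q i
    · rw [if_pos ⟨hP, hq⟩, if_pos hP, pow_add, ← Finset.prod_pow_eq_pow_sum]
      congr 1
      exact Finset.prod_congr rfl fun i _ => (if_pos (hq i)).symm
    · rw [if_neg (fun h => hq h.2)]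
      obtain ⟨i, hi⟩ := not_forall.mp hq
      have h0 : (if Q i then (X : Polynomial ℤ) ^ (m i) else 0) = 0 := if_neg hi
      rw [Finset.prod_eq_zero (Finset.mem_univ i) h0, mul_zero]
  · rw [if_neg (fun h => hP h.1), if_neg hP, zero_mul]

lemma split_ite2 (P R : Prop) (n k : ℕ) [Decidable P] [Decidable R] [Decidable (P ∧ R)] :
    (if (P ∧ R) then (X : Polynomial ℤ) ^ (n + k) else 0)
      = (if P then (X : Polynomial ℤ) ^ n else 0) * (if R then (X : Polynomial ℤ) ^ k else 0) := by
  by_cases hP : P <;> by_cases hR : R <;> simp [hP, hR, pow_add]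

end Aux2

section Main

variable {V W : Type*} [Fintype V] [Fintype W]
  (G : SimpleGraph V) (A : Finset V) (H : SimpleGraph W)

lemma corona_indep_iff (t : Finset V) (p : ↥A → Finset W) :
    ((t.disjSum (fn2set p) : Finset (V ⊕ ↥A × W)) : Set (V ⊕ ↥A × W)).Pairwise
        (fun u v => ¬ (partialCorona G A H).Adj u v)
      ↔ ((t : Set V).Pairwise (fun u v => ¬ G.Adj u v) ∧
          ∀ a : ↥A, ((p a : Set W).Pairwise (fun u v => ¬ H.Adj u v) ∧ ((a : V) ∈ t → p a = ∅))) := by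
  constructor
  · intro h
    refine ⟨?_, fun a => ⟨?_, ?_⟩⟩
    · intro u hu v hv huv
      exact fun hadj => h (Finset.mem_coe.mpr (Finset.inl_mem_disjSum.mpr (Finset.mem_coe.mp hu)))
        (Finset.mem_coe.mpr (Finset.inl_mem_disjSum.mpr (Finset.mem_coe.mp hv)))
        (fun c => huv (Sum.inl.inj c)) hadj
    · intro w hw w' hw' hww
      exact fun hadj => h
        (Finset.mem_coe.mpr (Finset.inr_mem_disjSum.mpr ((mem_fn2set p a w).mpr (Finset.mem_coe.mp hw))))
        (Finset.mem_coe.mpr (Finset.inr_mem_disjSum.mpr ((mem_fn2set p a w').mpr (Finset.mem_coe.mp hw'))))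
        (fun c => hww (congrArg Prod.snd (Sum.inr.inj c))) ⟨rfl, hadj⟩
    · intro hat
      by_contra hne
      obtain ⟨w, hw⟩ := Finset.nonempty_iff_ne_empty.mpr hne
      exact h (Finset.mem_coe.mpr (Finset.inl_mem_disjSum.mpr hat))
        (Finset.mem_coe.mpr (Finset.inr_mem_disjSum.mpr ((mem_fn2set p a w).mpr hw)))
        Sum.inl_ne_inr rfl
  · rintro ⟨hG, hp⟩ x hx y hy hne
    rcases x with u | ⟨a, w⟩ <;> rcases y with v | ⟨b, w'⟩
    · exact fun hadj => hG (Finset.mem_coe.mpr (Finset.inl_mem_disjSum.mp (Finset.mem_coe.mp hx)))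
        (Finset.mem_coe.mpr (Finset.inl_mem_disjSum.mp (Finset.mem_coe.mp hy)))
        (fun c => hne (congrArg Sum.inl c)) hadj
    · intro hadj
      have hbt : (b : V) ∈ t := hadj ▸ Finset.inl_mem_disjSum.mp (Finset.mem_coe.mp hx)
      have hw' : w' ∈ p b := (mem_fn2set p b w').mp (Finset.inr_mem_disjSum.mp (Finset.mem_coe.mp hy))
      rw [(hp b).2 hbt] at hw'
      exact absurd hw' (Finset.notMem_empty _)
    · intro hadj
      have hbt : (a : V) ∈ t := hadj ▸ Finset.inl_mem_disjSum.mp (Finset.mem_coe.mp hy)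
      have hw2 : w ∈ p a := (mem_fn2set p a w).mp (Finset.inr_mem_disjSum.mp (Finset.mem_coe.mp hx))
      rw [(hp a).2 hbt] at hw2
      exact absurd hw2 (Finset.notMem_empty _)
    · rintro ⟨rfl, hadj⟩
      exact (hp a).1
        (Finset.mem_coe.mpr ((mem_fn2set p a w).mp (Finset.inr_mem_disjSum.mp (Finset.mem_coe.mp hx))))
        (Finset.mem_coe.mpr ((mem_fn2set p a w').mp (Finset.inr_mem_disjSum.mp (Finset.mem_coe.mp hy))))
        (fun c => hne (by rw [c])) hadj

lemma zykov_indep_iff (t : Finset V) (g : Finset W) :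
    ((t.disjSum g : Finset (V ⊕ W)) : Set (V ⊕ W)).Pairwise
        (fun u v => ¬ (partialZykovSum G A H).Adj u v)
      ↔ ((t : Set V).Pairwise (fun u v => ¬ G.Adj u v) ∧
        ((g : Set W).Pairwise (fun u v => ¬ H.Adj u v) ∧ ((∃ a ∈ A, a ∈ t) → g = ∅))) := by
  constructor
  · intro h
    refine ⟨?_, ?_, ?_⟩
    · intro u hu v hv huv
      exact fun hadj => h (Finset.mem_coe.mpr (Finset.inl_mem_disjSum.mpr (Finset.mem_coe.mp hu)))
        (Finset.mem_coe.mpr (Finset.inl_mem_disjSum.mpr (Finset.mem_coe.mp hv)))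
        (fun c => huv (Sum.inl.inj c)) hadj
    · intro w hw w' hw' hww
      exact fun hadj => h (Finset.mem_coe.mpr (Finset.inr_mem_disjSum.mpr (Finset.mem_coe.mp hw)))
        (Finset.mem_coe.mpr (Finset.inr_mem_disjSum.mpr (Finset.mem_coe.mp hw')))
        (fun c => hww (Sum.inr.inj c)) hadj
    · rintro ⟨a, haA, hat⟩
      by_contra hne
      obtain ⟨w, hw⟩ := Finset.nonempty_iff_ne_empty.mpr hne
      exact h (Finset.mem_coe.mpr (Finset.inl_mem_disjSum.mpr hat))
        (Finset.mem_coe.mpr (Finset.inr_mem_disjSum.mpr hw))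
        Sum.inl_ne_inr haA
  · rintro ⟨hG, hH, hg⟩ x hx y hy hne
    rcases x with u | w <;> rcases y with v | w'
    · exact fun hadj => hG (Finset.mem_coe.mpr (Finset.inl_mem_disjSum.mp (Finset.mem_coe.mp hx)))
        (Finset.mem_coe.mpr (Finset.inl_mem_disjSum.mp (Finset.mem_coe.mp hy)))
        (fun c => hne (congrArg Sum.inl c)) hadj
    · intro hadj
      have h0 : g = ∅ := hg ⟨u, hadj, Finset.inl_mem_disjSum.mp (Finset.mem_coe.mp hx)⟩
      have hw' : w' ∈ g := Finset.inr_mem_disjSum.mp (Finset.mem_coe.mp hy)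
      rw [h0] at hw'
      exact absurd hw' (Finset.notMem_empty _)
    · intro hadj
      have h0 : g = ∅ := hg ⟨v, hadj, Finset.inl_mem_disjSum.mp (Finset.mem_coe.mp hy)⟩
      have hw' : w ∈ g := Finset.inr_mem_disjSum.mp (Finset.mem_coe.mp hx)
      rw [h0] at hw'
      exact absurd hw' (Finset.notMem_empty _)
    · exact fun hadj => hH (Finset.mem_coe.mpr (Finset.inr_mem_disjSum.mp (Finset.mem_coe.mp hx)))
        (Finset.mem_coe.mpr (Finset.inr_mem_disjSum.mp (Finset.mem_coe.mp hy)))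
        (fun c => hne (congrArg Sum.inr c)) hadj

lemma prod_factor (hA : A.Nonempty) (hclique : G.IsClique (A : Set V)) (t : Finset V)
    (ht : (t : Set V).Pairwise (fun u v => ¬ G.Adj u v))
    [∀ a : ↥A, Decidable ((a : V) ∈ t)] [Decidable (∃ a ∈ A, a ∈ t)] :
    (∏ a : ↥A, if (a : V) ∈ t then (1 : Polynomial ℤ) else indepPoly H)
      = indepPoly H ^ (A.card - 1) * (if (∃ a ∈ A, a ∈ t) then 1 else indepPoly H) := by
  by_cases hex : ∃ a ∈ A, a ∈ t
  · rw [if_pos hex]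
    obtain ⟨a₀, ha₀A, ha₀t⟩ := hex
    have key : ∀ b : ↥A, (b : V) ∈ t → b = (⟨a₀, ha₀A⟩ : ↥A) := by
      intro b hb
      by_contra hbn
      have hne : (b : V) ≠ a₀ := fun c => hbn (Subtype.ext c)
      exact ht (Finset.mem_coe.mpr hb) (Finset.mem_coe.mpr ha₀t) hne
        (hclique (Finset.mem_coe.mpr b.2) (Finset.mem_coe.mpr ha₀A) hne)
    rw [← Finset.mul_prod_erase Finset.univ _ (Finset.mem_univ (⟨a₀, ha₀A⟩ : ↥A)),
      if_pos ha₀t, one_mul]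
    have hrest : ∀ b ∈ Finset.univ.erase (⟨a₀, ha₀A⟩ : ↥A),
        (if (b : V) ∈ t then (1 : Polynomial ℤ) else indepPoly H) = indepPoly H := by
      intro b hb
      exact if_neg (fun hbt => (Finset.mem_erase.mp hb).1 (key b hbt))
    rw [Finset.prod_congr rfl hrest, Finset.prod_const,
      Finset.card_erase_of_mem (Finset.mem_univ _), Finset.card_univ, Fintype.card_coe, mul_one]
  · rw [if_neg hex]
    have hall : ∀ b ∈ (Finset.univ : Finset ↥A),
        (if (b : V) ∈ t then (1 : Polynomial ℤ) else indepPoly H) = indepPoly H := by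
      intro b _
      exact if_neg (fun hbt => hex ⟨b, b.2, hbt⟩)
    rw [Finset.prod_congr rfl hall, Finset.prod_const, Finset.card_univ, Fintype.card_coe,
      ← pow_succ, Nat.sub_add_cancel hA.card_pos]

end Main

set_option maxHeartbeats 1000000 in
theorem partialCorona_indepPoly {V W : Type*} [Fintype V] [Fintype W]
    (G : SimpleGraph V) (A : Finset V) (H : SimpleGraph W)
    (hA : A.Nonempty) (hclique : G.IsClique (A : Set V)) :
    indepPoly (partialCorona G A H) =
      indepPoly H ^ (A.card - 1) * indepPoly (partialZykovSum G A H) := by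
  have hcor : indepPoly (partialCorona G A H)
      = ∑ t : Finset V,
          (if (t : Set V).Pairwise (fun u v => ¬ G.Adj u v) then (X : Polynomial ℤ) ^ t.card else 0)
            * ∏ a : ↥A, (if (a : V) ∈ t then (1 : Polynomial ℤ) else indepPoly H) := by
    rw [indepPoly_def, sum_finset_sum_type]
    refine Finset.sum_congr rfl fun t _ => ?_
    rw [sum_finset_prod_type]
    have hterm : ∀ p : ↥A → Finset W,
        (if ((t.disjSum (fn2set p) : Finset (V ⊕ ↥A × W)) : Set (V ⊕ ↥A × W)).Pairwise
            (fun u v => ¬ (partialCorona G A H).Adj u v)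
          then (X : Polynomial ℤ) ^ (t.disjSum (fn2set p)).card else 0)
        = (if (t : Set V).Pairwise (fun u v => ¬ G.Adj u v)
              then (X : Polynomial ℤ) ^ t.card else 0)
            * ∏ a : ↥A, (if ((p a : Set W).Pairwise (fun u v => ¬ H.Adj u v)
                ∧ ((a : V) ∈ t → p a = ∅))
              then (X : Polynomial ℤ) ^ (p a).card else 0) := by
      intro p
      rw [Finset.card_disjSum, card_fn2set]
      exact Eq.trans (ite_congr_inst (corona_indep_iff G A H t p)) (split_ite _ _ _ _)
    rw [Finset.sum_congr rfl (fun p _ => hterm p), ← Finset.mul_sum]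
    congr 1
    rw [show (∑ p : ↥A → Finset W, ∏ a : ↥A,
          (if ((p a : Set W).Pairwise (fun u v => ¬ H.Adj u v) ∧ ((a : V) ∈ t → p a = ∅))
            then (X : Polynomial ℤ) ^ (p a).card else 0))
        = ∏ a : ↥A, ∑ g : Finset W,
          (if ((g : Set W).Pairwise (fun u v => ¬ H.Adj u v) ∧ ((a : V) ∈ t → g = ∅))
            then (X : Polynomial ℤ) ^ g.card else 0) from by
        rw [Finset.prod_univ_sum, Fintype.piFinset_univ]]
    exact Finset.prod_congr rfl fun a _ => innerSum H _
  have hzyk : indepPoly (partialZykovSum G A H)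
      = ∑ t : Finset V,
          (if (t : Set V).Pairwise (fun u v => ¬ G.Adj u v) then (X : Polynomial ℤ) ^ t.card else 0)
            * (if (∃ a ∈ A, a ∈ t) then (1 : Polynomial ℤ) else indepPoly H) := by
    rw [indepPoly_def, sum_finset_sum_type]
    refine Finset.sum_congr rfl fun t _ => ?_
    have hterm : ∀ g : Finset W,
        (if ((t.disjSum g : Finset (V ⊕ W)) : Set (V ⊕ W)).Pairwise
            (fun u v => ¬ (partialZykovSum G A H).Adj u v)
          then (X : Polynomial ℤ) ^ (t.disjSum g).card else 0)
        = (if (t : Set V).Pairwise (fun u v => ¬ G.Adj u v)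
              then (X : Polynomial ℤ) ^ t.card else 0)
            * (if ((g : Set W).Pairwise (fun u v => ¬ H.Adj u v)
                ∧ ((∃ a ∈ A, a ∈ t) → g = ∅))
              then (X : Polynomial ℤ) ^ g.card else 0) := by
      intro g
      rw [Finset.card_disjSum]
      exact Eq.trans (ite_congr_inst (zykov_indep_iff G A H t g)) (split_ite2 _ _ _ _)
    rw [Finset.sum_congr rfl (fun g _ => hterm g), ← Finset.mul_sum]
    congr 1
    exact innerSum H _
  rw [hcor, hzyk, Finset.mul_sum]
  refine Finset.sum_congr rfl fun t _ => ?_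
  by_cases ht : (t : Set V).Pairwise (fun u v => ¬ G.Adj u v)
  · rw [prod_factor G A H hA hclique t ht]
    ring
  · rw [if_neg ht, zero_mul, zero_mul, mul_zero]
end

section
/- Let G be a graph on n vertices and Φ = {A₁, ..., A_q} a clique cover of G (a partition of V(G) into cliques). Then I(G ∘ 2K₁; x) = (1+x)^{2n − 2|Φ|} · I(Φ(G); x), where Φ(G) is obtained from G by adding, for each clique Q ∈ Φ, two new nonadjacent vertices joined to all vertices of Q. -/
open Polynomial

/-- The graph `Φ(G)` obtained from a clique cover `Φ` by adding, for each clique,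
two new nonadjacent vertices joined to all vertices of the clique. -/
def cliqueExtend {V : Type*} [Fintype V] [DecidableEq V] (G : SimpleGraph V)
    (Φ : Finpartition (Finset.univ : Finset V)) :
    SimpleGraph (V ⊕ Φ.parts × Fin 2) where
  Adj x y :=
    match x, y with
    | .inl u, .inl v => G.Adj u v
    | .inl u, .inr (P, _) => u ∈ (P : Finset V)
    | .inr (P, _), .inl u => u ∈ (P : Finset V)
    | .inr _, .inr _ => False
  symm := by
    constructor
    rintro (u | ⟨P, i⟩) (v | ⟨Q, j⟩) h
    · exact G.adj_symm h
    · exact h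
    · exact h
    · exact h.elim
  loopless := by
    constructor
    rintro (u | ⟨P, i⟩) h
    · exact G.irrefl h
    · exact h

open Finset

open scoped Classical

-- sum over subsets
lemma sum_powerset_pow {W : Type*} [DecidableEq W] (T : Finset W) :
    ∑ B ∈ T.powerset, (X : Polynomial ℤ) ^ B.card = (1 + X) ^ T.card := by
  have h := Finset.prod_add (fun _ : W => (X : Polynomial ℤ)) (fun _ => 1) T
  simp only [Finset.prod_const, one_pow, mul_one] at h
  rw [add_comm (1 : Polynomial ℤ) X]
  exact h.symm

noncomputable def finsetSumEquiv (α β : Type*) : Finset (α ⊕ β) ≃ Finset α × Finset β where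
  toFun s := (s.toLeft, s.toRight)
  invFun p := p.1.disjSum p.2
  left_inv s := Finset.toLeft_disjSum_toRight
  right_inv p := by simp

lemma indep_key {V W : Type*} [Fintype V] [Fintype W]
    (G : SimpleGraph V) (R : V → W → Prop)
    (H : SimpleGraph (V ⊕ W))
    (hll : ∀ u v, H.Adj (.inl u) (.inl v) ↔ G.Adj u v)
    (hlr : ∀ u w, H.Adj (.inl u) (.inr w) ↔ R u w)
    (hrr : ∀ w w', ¬ H.Adj (.inr w) (.inr w'))
    (A : Finset V) (B : Finset W) :
    ((A.disjSum B : Finset (V ⊕ W)) : Set (V ⊕ W)).Pairwise (fun u v => ¬ H.Adj u v) ↔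
      ((A : Set V).Pairwise (fun u v => ¬ G.Adj u v) ∧ ∀ a ∈ A, ∀ b ∈ B, ¬ R a b) := by
  constructor
  · intro h
    refine ⟨fun a ha a' ha' hne hadj => ?_, fun a ha b hb hR => ?_⟩
    · exact h (by rw [Finset.mem_coe, Finset.mem_disjSum]; exact Or.inl ⟨a, ha, rfl⟩)
        (by rw [Finset.mem_coe, Finset.mem_disjSum]; exact Or.inl ⟨a', ha', rfl⟩)
        (fun c => hne (Sum.inl.inj c)) ((hll a a').mpr hadj)
    · exact h (by rw [Finset.mem_coe, Finset.mem_disjSum]; exact Or.inl ⟨a, ha, rfl⟩)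
        (by rw [Finset.mem_coe, Finset.mem_disjSum]; exact Or.inr ⟨b, hb, rfl⟩)
        (by simp) ((hlr a b).mpr hR)
  · rintro ⟨h1, h2⟩ x hx y hy hne hadj
    rcases x with a | b <;> rcases y with a' | b'
    · have ha : a ∈ A := by
        have := hx; rw [Finset.mem_coe, Finset.mem_disjSum] at this; simpa using this
      have ha' : a' ∈ A := by
        have := hy; rw [Finset.mem_coe, Finset.mem_disjSum] at this; simpa using this
      exact h1 ha ha' (fun c => hne (by rw [c])) ((hll a a').mp hadj)
    · have ha : a ∈ A := by
        have := hx; rw [Finset.mem_coe, Finset.mem_disjSum] at this; simpa using this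
      have hb : b' ∈ B := by
        have := hy; rw [Finset.mem_coe, Finset.mem_disjSum] at this; simpa using this
      exact h2 a ha b' hb ((hlr a b').mp hadj)
    · have ha : a' ∈ A := by
        have := hy; rw [Finset.mem_coe, Finset.mem_disjSum] at this; simpa using this
      have hb : b ∈ B := by
        have := hx; rw [Finset.mem_coe, Finset.mem_disjSum] at this; simpa using this
      exact h2 a' ha b hb ((hlr a' b).mp hadj.symm)
    · exact hrr b b' hadj

set_option maxHeartbeats 1000000 in
lemma indep_decomp {V W : Type*} [Fintype V] [Fintype W]
    (G : SimpleGraph V) (R : V → W → Prop)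
    (H : SimpleGraph (V ⊕ W))
    (hll : ∀ u v, H.Adj (.inl u) (.inl v) ↔ G.Adj u v)
    (hlr : ∀ u w, H.Adj (.inl u) (.inr w) ↔ R u w)
    (hrr : ∀ w w', ¬ H.Adj (.inr w) (.inr w')) :
    indepPoly H = ∑ A : Finset V,
      if (A : Set V).Pairwise (fun u v => ¬ G.Adj u v)
      then X ^ A.card * (1 + X) ^ (Finset.univ.filter fun w => ∀ a ∈ A, ¬ R a w).card
      else 0 := by
  classical
  unfold indepPoly
  rw [Fintype.sum_equiv (finsetSumEquiv V W) _
      (fun p : Finset V × Finset W =>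
        if ((p.1 : Set V).Pairwise (fun u v => ¬ G.Adj u v) ∧ ∀ a ∈ p.1, ∀ b ∈ p.2, ¬ R a b)
        then (X : Polynomial ℤ) ^ (p.1.card + p.2.card) else 0)
      (fun s => by
        conv_lhs => rw [← Finset.toLeft_disjSum_toRight (u := s)]
        rw [Finset.card_disjSum]
        simp only [finsetSumEquiv, Equiv.coe_fn_mk]
        by_cases h : ((s.toLeft.disjSum s.toRight : Finset (V ⊕ W)) : Set (V ⊕ W)).Pairwise
            (fun u v => ¬ H.Adj u v)
        · rw [if_pos h]; exact (if_pos ((indep_key G R H hll hlr hrr _ _).mp h)).symm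
        · rw [if_neg h]; exact (if_neg (fun c => h ((indep_key G R H hll hlr hrr _ _).mpr c))).symm)]
  rw [Fintype.sum_prod_type]
  refine Finset.sum_congr rfl fun A _ => ?_
  by_cases h1 : (A : Set V).Pairwise (fun u v => ¬ G.Adj u v)
  · rw [if_pos h1]
    have hiff : ∀ B : Finset W, (∀ a ∈ A, ∀ b ∈ B, ¬ R a b) ↔
        B ∈ (Finset.univ.filter fun w => ∀ a ∈ A, ¬ R a w).powerset := by
      intro B
      rw [Finset.mem_powerset]
      constructor
      · intro h b hb
        simp only [Finset.mem_filter, Finset.mem_univ, true_and]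
        intro a ha; exact h a ha b hb
      · intro h a ha b hb
        have := h hb; simp only [Finset.mem_filter] at this
        exact this.2 a ha
    calc ∑ B : Finset W,
          (if ((A : Set V).Pairwise (fun u v => ¬ G.Adj u v) ∧ ∀ a ∈ A, ∀ b ∈ B, ¬ R a b)
           then (X : Polynomial ℤ) ^ (A.card + B.card) else 0)
        = ∑ B ∈ (Finset.univ.filter fun w => ∀ a ∈ A, ¬ R a w).powerset,
            (X : Polynomial ℤ) ^ (A.card + B.card) := by
          rw [← Finset.sum_filter]
          apply Finset.sum_congr
          · ext B
            simp only [Finset.mem_filter, Finset.mem_univ, true_and]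
            rw [← hiff B]
            exact ⟨fun h => h.2, fun h => ⟨h1, h⟩⟩
          · intros; rfl
      _ = X ^ A.card * (1 + X) ^ (Finset.univ.filter fun w => ∀ a ∈ A, ¬ R a w).card := by
          rw [← sum_powerset_pow, Finset.mul_sum]
          exact Finset.sum_congr rfl fun B _ => by rw [pow_add]
  · rw [if_neg h1]
    refine Finset.sum_eq_zero fun B _ => ?_
    exact if_neg (fun c => h1 c.1)

lemma corona_eval {V : Type*} [Fintype V] [DecidableEq V] (G : SimpleGraph V) :
    indepPoly (corona G (⊥ : SimpleGraph (Fin 2))) = ∑ A : Finset V,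
      if (A : Set V).Pairwise (fun u v => ¬ G.Adj u v)
      then X ^ A.card * (1 + X) ^ ((Fintype.card V - A.card) * 2) else 0 := by
  rw [indep_decomp G (fun u (w : V × Fin 2) => u = w.1) (corona G ⊥)
    (fun u v => Iff.rfl)
    (fun u w => by rcases w with ⟨v, i⟩; exact Iff.rfl)
    (fun w w' h => by rcases w with ⟨v, i⟩; rcases w' with ⟨v', i'⟩; exact h.2)]
  refine Finset.sum_congr rfl fun A _ => ?_
  by_cases h1 : (A : Set V).Pairwise (fun u v => ¬ G.Adj u v)
  · rw [if_pos h1, if_pos h1]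
    congr 2
    have hset : (Finset.univ.filter fun w : V × Fin 2 => ∀ a ∈ A, ¬ a = w.1)
        = Aᶜ ×ˢ Finset.univ := by
      ext ⟨v, i⟩
      simp only [Finset.mem_filter, Finset.mem_univ, true_and, Finset.mem_product,
        Finset.mem_compl, and_true]
      constructor
      · intro h hv; exact h v hv rfl
      · intro h a ha c; exact h (c ▸ ha)
    rw [Finset.filter_congr_decidable, hset, Finset.card_product, Finset.card_compl, Finset.card_univ]
    simp
  · rw [if_neg h1, if_neg h1]

lemma card_meets {V : Type*} [Fintype V] [DecidableEq V] (G : SimpleGraph V)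
    (Φ : Finpartition (Finset.univ : Finset V))
    (hΦ : ∀ P ∈ Φ.parts, G.IsClique (P : Set V)) (A : Finset V)
    (h1 : (A : Set V).Pairwise (fun u v => ¬ G.Adj u v)) :
    (Finset.univ.filter fun P : ↥Φ.parts => ¬ ∀ a ∈ A, a ∉ (P : Finset V)).card
      = A.card := by
  symm
  refine Finset.card_bij
    (fun a _ => (⟨Φ.part a, Φ.part_mem.mpr (Finset.mem_univ a)⟩ : ↥Φ.parts)) ?_ ?_ ?_
  · intro a ha
    simp only [Finset.mem_filter, Finset.mem_univ, true_and]
    intro hall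
    exact hall a ha (Φ.mem_part (Finset.mem_univ a))
  · intro a₁ ha₁ a₂ ha₂ heq
    have hpq : Φ.part a₁ = Φ.part a₂ := congrArg Subtype.val heq
    by_contra hne
    have hm2 : a₂ ∈ Φ.part a₁ := hpq ▸ Φ.mem_part (Finset.mem_univ a₂)
    have hadj : G.Adj a₁ a₂ :=
      (hΦ _ (Φ.part_mem.mpr (Finset.mem_univ a₁)))
        (Finset.mem_coe.mpr (Φ.mem_part (Finset.mem_univ a₁)))
        (Finset.mem_coe.mpr hm2) hne
    exact h1 (Finset.mem_coe.mpr ha₁) (Finset.mem_coe.mpr ha₂) hne hadj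
  · intro P hP
    simp only [Finset.mem_filter, Finset.mem_univ, true_and] at hP
    push_neg at hP
    obtain ⟨a, ha, haP⟩ := hP
    exact ⟨a, ha, Subtype.ext (Φ.part_eq_of_mem P.2 haP)⟩

lemma cliqueExtend_eval {V : Type*} [Fintype V] [DecidableEq V] (G : SimpleGraph V)
    (Φ : Finpartition (Finset.univ : Finset V))
    (hΦ : ∀ P ∈ Φ.parts, G.IsClique (P : Set V)) :
    indepPoly (cliqueExtend G Φ) = ∑ A : Finset V,
      if (A : Set V).Pairwise (fun u v => ¬ G.Adj u v)
      then X ^ A.card * (1 + X) ^ ((Φ.parts.card - A.card) * 2) else 0 := by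
  rw [indep_decomp G (fun u (w : ↥Φ.parts × Fin 2) => u ∈ (w.1 : Finset V))
    (cliqueExtend G Φ)
    (fun u v => Iff.rfl)
    (fun u w => by rcases w with ⟨P, i⟩; exact Iff.rfl)
    (fun w w' h => by rcases w with ⟨P, i⟩; rcases w' with ⟨P', i'⟩; exact h)]
  refine Finset.sum_congr rfl fun A _ => ?_
  by_cases h1 : (A : Set V).Pairwise (fun u v => ¬ G.Adj u v)
  · rw [if_pos h1, if_pos h1]
    congr 2
    have hset : (Finset.univ.filter fun w : ↥Φ.parts × Fin 2 => ∀ a ∈ A, ¬ a ∈ (w.1 : Finset V))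
        = (Finset.univ.filter fun P : ↥Φ.parts => ∀ a ∈ A, a ∉ (P : Finset V)) ×ˢ Finset.univ := by
      ext ⟨P, i⟩
      simp only [Finset.mem_filter, Finset.mem_univ, true_and, Finset.mem_product, and_true]
    rw [Finset.filter_congr_decidable, hset, Finset.card_product]
    have hsplit := Finset.card_filter_add_card_filter_not
      (s := (Finset.univ : Finset ↥Φ.parts))
      (p := fun P : ↥Φ.parts => ∀ a ∈ A, a ∉ (P : Finset V))
    rw [card_meets G Φ hΦ A h1] at hsplit
    have hcard : (Finset.univ : Finset ↥Φ.parts).card = Φ.parts.card := by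
      rw [Finset.card_univ, Fintype.card_coe]
    have : Fintype.card (Fin 2) = 2 := by simp
    congr 1
    omega
  · rw [if_neg h1, if_neg h1]


theorem cliqueCover_factorization {V : Type*} [Fintype V] [DecidableEq V]
    (G : SimpleGraph V) (Φ : Finpartition (Finset.univ : Finset V))
    (hΦ : ∀ P ∈ Φ.parts, G.IsClique (P : Set V)) :
    indepPoly (corona G (⊥ : SimpleGraph (Fin 2))) =
      (1 + X) ^ (2 * Fintype.card V - 2 * Φ.parts.card) * indepPoly (cliqueExtend G Φ) := by
  have hqn : Φ.parts.card ≤ Fintype.card V := by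
    simpa using Φ.card_parts_le_card
  rw [corona_eval G, cliqueExtend_eval G Φ hΦ, Finset.mul_sum]
  refine Finset.sum_congr rfl fun A _ => ?_
  by_cases h1 : (A : Set V).Pairwise (fun u v => ¬ G.Adj u v)
  · rw [if_pos h1, if_pos h1]
    have hAq : A.card ≤ Φ.parts.card := by
      rw [← card_meets G Φ hΦ A h1]
      calc (Finset.univ.filter fun P : ↥Φ.parts => ¬ ∀ a ∈ A, a ∉ (P : Finset V)).card
          ≤ (Finset.univ : Finset ↥Φ.parts).card := Finset.card_filter_le _ _
        _ = Φ.parts.card := by rw [Finset.card_univ, Fintype.card_coe]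
    rw [mul_comm ((1 + X : Polynomial ℤ) ^ (2 * Fintype.card V - 2 * Φ.parts.card)), mul_assoc,
      ← pow_add]
    have hexp : (Fintype.card V - A.card) * 2
        = (Φ.parts.card - A.card) * 2 + (2 * Fintype.card V - 2 * Φ.parts.card) := by omega
    rw [hexp]
  · rw [if_neg h1, if_neg h1, mul_zero]
end

section
/- For every clique cover Φ of a graph G, the independence polynomial I(Φ(G); x) is symmetric (palindromic). -/
open Polynomial

section Aux

open Finset

/-- Sum of `X^|t|` over subsets of `A` equals `(1+X)^|A|`. -/
lemma sum_pow_card_powerset {W : Type*} [DecidableEq W] (A : Finset W) :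
    ∑ t ∈ A.powerset, (X : Polynomial ℤ) ^ t.card = (1 + X) ^ A.card := by
  calc ∑ t ∈ A.powerset, (X : Polynomial ℤ) ^ t.card
      = ∑ t ∈ A.powerset, (∏ _i ∈ t, (X : Polynomial ℤ)) * ∏ _i ∈ A \ t, (1 : Polynomial ℤ) := by
        simp [Finset.prod_const]
    _ = ∏ _i ∈ A, ((X : Polynomial ℤ) + 1) := (Finset.prod_add _ _ _).symm
    _ = (1 + X) ^ A.card := by rw [Finset.prod_const, add_comm]

/-- The coefficients of `X^j * (1+X)^(2(k-j))`. -/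
lemma coeff_term (k j m : ℕ) :
    ((X : Polynomial ℤ) ^ j * (1 + X) ^ (2 * (k - j))).coeff m
      = if j ≤ m then ((2 * (k - j)).choose (m - j) : ℤ) else 0 := by
  rw [mul_comm, Polynomial.coeff_mul_X_pow']
  split_ifs with h
  · rw [Polynomial.coeff_one_add_X_pow]
  · rfl

lemma coeff_term_symm (k j m : ℕ) (hj : j ≤ k) (hm : m ≤ 2 * k) :
    ((X : Polynomial ℤ) ^ j * (1 + X) ^ (2 * (k - j))).coeff m
      = ((X : Polynomial ℤ) ^ j * (1 + X) ^ (2 * (k - j))).coeff (2 * k - m) := by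
  rw [coeff_term, coeff_term]
  by_cases h1 : j ≤ m <;> by_cases h2 : j ≤ 2 * k - m
  · rw [if_pos h1, if_pos h2]
    have hle : m - j ≤ 2 * (k - j) := by omega
    have : 2 * k - m - j = 2 * (k - j) - (m - j) := by omega
    rw [this, Nat.choose_symm hle]
  · rw [if_pos h1, if_neg h2]
    have : 2 * (k - j) < m - j := by omega
    rw [Nat.choose_eq_zero_of_lt this, Int.natCast_zero]
  · rw [if_neg h1, if_pos h2]
    have : 2 * (k - j) < 2 * k - m - j := by omega
    rw [Nat.choose_eq_zero_of_lt this, Int.natCast_zero]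
  · rw [if_neg h1, if_neg h2]

lemma coeff_term_high (k j m : ℕ) (hj : j ≤ k) (hm : 2 * k < m) :
    ((X : Polynomial ℤ) ^ j * (1 + X) ^ (2 * (k - j))).coeff m = 0 := by
  rw [coeff_term]
  split_ifs with h
  · have : 2 * (k - j) < m - j := by omega
    rw [Nat.choose_eq_zero_of_lt this, Int.natCast_zero]
  · rfl

lemma coeff_term_top (k j : ℕ) (hj : j ≤ k) :
    ((X : Polynomial ℤ) ^ j * (1 + X) ^ (2 * (k - j))).coeff (2 * k)
      = if j = 0 then 1 else 0 := by
  rw [coeff_term]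
  rcases Nat.eq_zero_or_pos j with rfl | hjpos
  · simp
  · rw [if_pos (show j ≤ 2 * k by omega), if_neg (by omega : ¬ j = 0)]
    have : 2 * (k - j) < 2 * k - j := by omega
    rw [Nat.choose_eq_zero_of_lt this, Int.natCast_zero]

end Aux

section Main

open Finset

variable {V : Type*} [Fintype V] [DecidableEq V]
variable (G : SimpleGraph V) (Φ : Finpartition (Finset.univ : Finset V))

/-- The set of "free" new vertices for an independent set `s`. -/
noncomputable def freeSet (s : Finset V) : Finset (↥Φ.parts × Fin 2) :=
  Finset.univ.filter (fun w => ∀ v ∈ s, v ∉ (w.1 : Finset V))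

lemma pair_cond (s : Finset V) (t : Finset (↥Φ.parts × Fin 2)) :
    ((s.disjSum t : Finset (V ⊕ ↥Φ.parts × Fin 2)) : Set (V ⊕ ↥Φ.parts × Fin 2)).Pairwise
        (fun u v => ¬ (cliqueExtend G Φ).Adj u v)
      ↔ ((s : Set V).Pairwise (fun u v => ¬ G.Adj u v) ∧ t ∈ (freeSet Φ s).powerset) := by
  constructor
  · intro h
    refine ⟨fun a ha b hb hab => ?_, ?_⟩
    · exact h (x := Sum.inl a) (y := Sum.inl b) (by simpa using ha) (by simpa using hb)
        (by simpa using hab)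
    · rw [Finset.mem_powerset]
      intro w hw
      simp only [freeSet, Finset.mem_filter, Finset.mem_univ, true_and]
      intro v hv hvw
      exact h (x := Sum.inr w) (by simp [hw]) (y := Sum.inl v) (by simp [hv]) (by simp)
        (by simpa [cliqueExtend] using hvw)
  · rintro ⟨h1, h2⟩
    rw [Finset.mem_powerset] at h2
    rintro (a | w) ha (b | w') hb hne
    · have ha' : a ∈ s := by simpa using ha
      have hb' : b ∈ s := by simpa using hb
      exact h1 ha' hb' (fun hab => hne (by rw [hab]))
    · have hw' : w' ∈ t := by simpa using hb
      have ha' : a ∈ s := by simpa using ha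
      have := h2 hw'
      simp only [freeSet, Finset.mem_filter, Finset.mem_univ, true_and] at this
      exact fun hadj => this a ha' hadj
    · have hw : w ∈ t := by simpa using ha
      have hb' : b ∈ s := by simpa using hb
      have := h2 hw
      simp only [freeSet, Finset.mem_filter, Finset.mem_univ, true_and] at this
      exact fun hadj => this b hb' hadj
    · exact fun hadj => hadj

lemma sum_finset_sum_eq {α β M : Type*} [Fintype α] [Fintype β] [AddCommMonoid M]
    (f : Finset (α ⊕ β) → M) :
    ∑ u : Finset (α ⊕ β), f u = ∑ s : Finset α, ∑ t : Finset β, f (s.disjSum t) := by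
  exact ((Fintype.sum_equiv
    ⟨fun p => p.1.disjSum p.2, fun u => (u.toLeft, u.toRight),
      fun p => by simp, fun u => by simp [Finset.toLeft_disjSum_toRight]⟩
    (fun p : Finset α × Finset β => f (p.1.disjSum p.2)) f (fun p => rfl)).symm).trans
    (Fintype.sum_prod_type _)

open scoped Classical in
lemma indepPoly_cliqueExtend :
    indepPoly (cliqueExtend G Φ)
      = ∑ s : Finset V, if (s : Set V).Pairwise (fun u v => ¬ G.Adj u v) then
          X ^ s.card * (1 + X) ^ (freeSet Φ s).card else 0 := by
  classical
  rw [indepPoly, sum_finset_sum_eq]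
  refine Finset.sum_congr rfl fun s _ => ?_
  trans (∑ t : Finset (↥Φ.parts × Fin 2),
      if (s : Set V).Pairwise (fun u v => ¬ G.Adj u v) then
        (if t ∈ (freeSet Φ s).powerset then (X : Polynomial ℤ) ^ s.card * X ^ t.card else 0)
      else 0)
  · refine Finset.sum_congr rfl fun t _ => ?_
    rw [Finset.card_disjSum]
    by_cases h1 : (s : Set V).Pairwise (fun u v => ¬ G.Adj u v)
    · by_cases h2 : t ∈ (freeSet Φ s).powerset
      · rw [if_pos ((pair_cond G Φ s t).mpr ⟨h1, h2⟩), if_pos h1, if_pos h2, pow_add]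
      · rw [if_neg (fun h => h2 ((pair_cond G Φ s t).mp h).2), if_pos h1, if_neg h2]
    · rw [if_neg (fun h => h1 ((pair_cond G Φ s t).mp h).1), if_neg h1]
  · by_cases h1 : (s : Set V).Pairwise (fun u v => ¬ G.Adj u v)
    · simp only [if_pos h1]
      rw [Finset.sum_ite_mem, Finset.univ_inter, ← Finset.mul_sum, sum_pow_card_powerset]
    · simp only [if_neg h1]
      simp

lemma card_freeSet (hΦ : ∀ P ∈ Φ.parts, G.IsClique (P : Set V)) (s : Finset V)
    (hs : (s : Set V).Pairwise (fun u v => ¬ G.Adj u v)) :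
    s.card ≤ Φ.parts.card ∧ (freeSet Φ s).card = 2 * (Φ.parts.card - s.card) := by
  classical
  set B : Finset ↥Φ.parts := Finset.univ.filter (fun P => ∀ v ∈ s, v ∉ (P : Finset V)) with hB
  have hprod : freeSet Φ s = B ×ˢ (Finset.univ : Finset (Fin 2)) := by
    ext ⟨P, i⟩
    simp [freeSet, hB]
  have hcardA : (freeSet Φ s).card = B.card * 2 := by
    rw [hprod, Finset.card_product]
    simp
  -- the complement of B has cardinality s.card
  have hcompl : (Finset.univ.filter (fun P : ↥Φ.parts => ¬ ∀ v ∈ s, v ∉ (P : Finset V))).card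
      = s.card := by
    symm
    refine Finset.card_bij
      (fun v _ => (⟨Φ.part v, Φ.part_mem.mpr (Finset.mem_univ v)⟩ : ↥Φ.parts)) ?_ ?_ ?_
    · intro v hv
      simp only [Finset.mem_filter, Finset.mem_univ, true_and, not_forall]
      exact ⟨v, hv, by simpa using Φ.mem_part (Finset.mem_univ v)⟩
    · intro v hv w hw hvw
      by_contra hne
      have hvP : v ∈ Φ.part v := Φ.mem_part (Finset.mem_univ v)
      have hwP : w ∈ Φ.part v := by
        have : Φ.part v = Φ.part w := by
          simpa using congrArg Subtype.val hvw
        rw [this]; exact Φ.mem_part (Finset.mem_univ w)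
      have hadj : G.Adj v w :=
        hΦ (Φ.part v) (Φ.part_mem.mpr (Finset.mem_univ v)) hvP hwP hne
      exact hs hv hw hne hadj
    · intro P hP
      simp only [Finset.mem_filter, Finset.mem_univ, true_and, not_forall] at hP
      obtain ⟨v, hv, hvP⟩ := hP
      have hvP' : v ∈ (P : Finset V) := by simpa using hvP
      refine ⟨v, hv, ?_⟩
      apply Subtype.ext
      simpa using Φ.part_eq_of_mem P.2 hvP'
  have htotal : B.card + s.card = Φ.parts.card := by
    rw [← hcompl, hB]
    rw [Finset.card_filter_add_card_filter_not]
    simp [Fintype.card_coe]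
  constructor
  · omega
  · omega

end Main

theorem cliqueExtend_symmetric {V : Type*} [Fintype V] [DecidableEq V]
    (G : SimpleGraph V) (Φ : Finpartition (Finset.univ : Finset V))
    (hΦ : ∀ P ∈ Φ.parts, G.IsClique (P : Set V)) :
    IsPalindromic (indepPoly (cliqueExtend G Φ)) := by
  classical
  set k := Φ.parts.card with hk
  set p := indepPoly (cliqueExtend G Φ) with hp
  have hrw : p = ∑ s : Finset V, if (s : Set V).Pairwise (fun u v => ¬ G.Adj u v) then
      (X : Polynomial ℤ) ^ s.card * (1 + X) ^ (2 * (k - s.card)) else 0 := by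
    rw [hp, indepPoly_cliqueExtend]
    refine Finset.sum_congr rfl fun s _ => ?_
    by_cases h : (s : Set V).Pairwise (fun u v => ¬ G.Adj u v)
    · rw [if_pos h, if_pos h, (card_freeSet G Φ hΦ s h).2]
    · rw [if_neg h, if_neg h]
  -- coefficient facts
  have hcoeff : ∀ m : ℕ, p.coeff m = ∑ s : Finset V,
      if (s : Set V).Pairwise (fun u v => ¬ G.Adj u v) then
        ((X : Polynomial ℤ) ^ s.card * (1 + X) ^ (2 * (k - s.card))).coeff m else 0 := by
    intro m
    rw [hrw, Polynomial.finset_sum_coeff]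
    refine Finset.sum_congr rfl fun s _ => ?_
    split_ifs <;> simp
  have hcard : ∀ s : Finset V, (s : Set V).Pairwise (fun u v => ¬ G.Adj u v) → s.card ≤ k :=
    fun s h => (card_freeSet G Φ hΦ s h).1
  have htop : p.coeff (2 * k) = 1 := by
    rw [hcoeff]
    rw [Finset.sum_eq_single (∅ : Finset V)]
    · simp only [Set.pairwise_empty, Finset.coe_empty, if_pos, Finset.card_empty]
      rw [coeff_term_top k 0 (Nat.zero_le k)]
      simp
    · intro s _ hne
      by_cases h : (s : Set V).Pairwise (fun u v => ¬ G.Adj u v)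
      · rw [if_pos h, coeff_term_top k s.card (hcard s h)]
        rw [if_neg (by simpa [Finset.card_eq_zero] using hne)]
      · rw [if_neg h]
    · intro h
      exact absurd (Finset.mem_univ _) h
  have hhigh : ∀ m, 2 * k < m → p.coeff m = 0 := by
    intro m hm
    rw [hcoeff]
    refine Finset.sum_eq_zero fun s _ => ?_
    by_cases h : (s : Set V).Pairwise (fun u v => ¬ G.Adj u v)
    · rw [if_pos h, coeff_term_high k s.card m (hcard s h) hm]
    · rw [if_neg h]
  have hdeg : p.natDegree = 2 * k := by
    have hle : p.natDegree ≤ 2 * k := by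
      rw [Polynomial.natDegree_le_iff_coeff_eq_zero]
      exact fun m hm => hhigh m hm
    have hge : 2 * k ≤ p.natDegree :=
      Polynomial.le_natDegree_of_ne_zero (by rw [htop]; exact one_ne_zero)
    omega
  intro j hj
  rw [hdeg] at hj ⊢
  rw [hcoeff, hcoeff]
  refine Finset.sum_congr rfl fun s _ => ?_
  by_cases h : (s : Set V).Pairwise (fun u v => ¬ G.Adj u v)
  · rw [if_pos h, if_pos h, coeff_term_symm k s.card j (hcard s h) hj]
  · rw [if_neg h, if_neg h]
end

section
/- Let G be a graph on n vertices and Γ a cycle cover of G (a spanning subgraph whose components are single vertices, single edges, or cycles) containing exactly k vertex-cycles. Then I(G ∘ 2K₁; x) = (1+x)^{n−k} · I(Γ(G); x), where Γ(G) is the graph produced by Stevanović's Rule 2. -/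
open Polynomial

/-- A cycle cover of `G`: a spanning subgraph whose components (indexed by `ι`) are
vertices (size 1), edges (size 2), or cycles (size ≥ 3). -/
structure CycleCover (ι : Type*) [Fintype ι] {V : Type*} (G : SimpleGraph V) where
  size : ι → ℕ
  pos : ∀ i, 0 < size i
  c : ∀ i, ZMod (size i) → V
  bij : Function.Bijective (fun p : Σ i, ZMod (size i) => c p.1 p.2)
  adj_edge : ∀ i, size i = 2 → G.Adj (c i 0) (c i 1)
  adj_cycle : ∀ i, 3 ≤ size i → ∀ j, G.Adj (c i j) (c i (j + 1))

/-- The graph `Γ(G)` obtained from a cycle cover by Stevanović's Rule 2. -/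
def gammaGraph {ι V : Type*} [Fintype ι] (G : SimpleGraph V) (cc : CycleCover ι G) :
    SimpleGraph (V ⊕ Σ i, Fin (max (cc.size i) 2)) where
  Adj x y :=
    match x, y with
    | .inl u, .inl v => G.Adj u v
    | .inl u, .inr ⟨i, j⟩ =>
        u = cc.c i ((j : ℕ) : ZMod (cc.size i)) ∨
          u = cc.c i (((j : ℕ) : ZMod (cc.size i)) + 1)
    | .inr ⟨i, j⟩, .inl u =>
        u = cc.c i ((j : ℕ) : ZMod (cc.size i)) ∨
          u = cc.c i (((j : ℕ) : ZMod (cc.size i)) + 1)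
    | .inr _, .inr _ => False
  symm := by
    constructor
    rintro (u | ⟨i, j⟩) (v | ⟨i', j'⟩) h
    · exact G.adj_symm h
    · exact h
    · exact h
    · exact h.elim
  loopless := by
    constructor
    rintro (u | ⟨i, j⟩) h
    · exact G.irrefl h
    · exact h

open Finset in
private lemma sum_pow_subset {β : Type*} [Fintype β] [DecidableEq β] (T : Finset β) :
    ∑ b : Finset β, (if b ⊆ T then (X : Polynomial ℤ) ^ b.card else 0) = (1 + X) ^ T.card := by
  classical
  have h1 : (Finset.univ.filter fun b : Finset β => b ⊆ T) = T.powerset := by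
    ext b; simp
  rw [← Finset.sum_filter, h1]
  have h2 := Finset.prod_add (fun _ : β => (X : Polynomial ℤ)) (fun _ => 1) T
  simp only [Finset.prod_const, Finset.prod_const_one, one_pow, mul_one] at h2
  rw [add_comm, ← h2]

open Finset in
private lemma card_filter_sigma {ι : Type*} [Fintype ι] {κ : ι → Type*} [∀ i, Fintype (κ i)]
    (p : (Σ i, κ i) → Prop) [DecidablePred p] :
    (Finset.univ.filter p).card = ∑ i, (Finset.univ.filter fun j => p ⟨i, j⟩).card := by
  rw [← Finset.card_sigma]
  congr 1
  ext ⟨i, j⟩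
  simp [Finset.mem_sigma]

open Finset in
private lemma sum_finset_sum_decomp {α β : Type*} [Fintype α] [Fintype β] {M : Type*}
    [AddCommMonoid M] (F : Finset (α ⊕ β) → M) :
    ∑ s : Finset (α ⊕ β), F s = ∑ a : Finset α, ∑ b : Finset β, F (a.disjSum b) := by
  have hbij : Function.Bijective (fun p : Finset α × Finset β => p.1.disjSum p.2) := by
    constructor
    · intro p q h
      have h1 := congrArg Finset.toLeft h
      have h2 := congrArg Finset.toRight h
      simp only [Finset.toLeft_disjSum, Finset.toRight_disjSum] at h1 h2
      exact Prod.ext h1 h2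
    · intro u
      exact ⟨(u.toLeft, u.toRight), u.toLeft_disjSum_toRight⟩
  rw [← Fintype.sum_bijective (fun p : Finset α × Finset β => p.1.disjSum p.2) hbij
      (fun p => F (p.1.disjSum p.2)) F (fun p => rfl), Fintype.sum_prod_type]

open Finset in
open scoped Classical in
private lemma indepPoly_split {α β : Type*} [Fintype α] [Fintype β]
    (H : SimpleGraph (α ⊕ β)) (hno : ∀ w w' : β, ¬ H.Adj (.inr w) (.inr w')) :
    indepPoly H = ∑ a : Finset α,
      (if (a : Set α).Pairwise (fun u v => ¬ H.Adj (.inl u) (.inl v)) then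
        X ^ a.card *
          (1 + X) ^ (Finset.univ.filter fun w : β => ∀ v ∈ a, ¬ H.Adj (.inl v) (.inr w)).card
      else 0) := by
  classical
  have main : (∑ s : Finset (α ⊕ β),
      if ((s : Finset (α ⊕ β)) : Set (α ⊕ β)).Pairwise (fun u v => ¬ H.Adj u v)
        then (X : Polynomial ℤ) ^ s.card else 0) = ∑ a : Finset α,
      (if (a : Set α).Pairwise (fun u v => ¬ H.Adj (.inl u) (.inl v)) then
        X ^ a.card *
          (1 + X) ^ (Finset.univ.filter fun w : β => ∀ v ∈ a, ¬ H.Adj (.inl v) (.inr w)).card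
      else 0) := by
    rw [sum_finset_sum_decomp]
    refine Finset.sum_congr rfl fun a _ => ?_
    set T : Finset β := Finset.univ.filter fun w : β => ∀ v ∈ a, ¬ H.Adj (.inl v) (.inr w) with hT
    have key : ∀ b : Finset β,
        (((a.disjSum b : Finset (α ⊕ β)) : Set (α ⊕ β)).Pairwise fun u v => ¬H.Adj u v) ↔
          ((a : Set α).Pairwise (fun u v => ¬ H.Adj (.inl u) (.inl v)) ∧ b ⊆ T) := by
      intro b
      constructor
      · intro h
        constructor
        · intro u hu v hv huv
          exact h (by simpa using hu) (by simpa using hv) (by simpa using huv)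
        · intro w hw
          rw [hT, Finset.mem_filter]
          refine ⟨Finset.mem_univ _, fun v hv hadj => ?_⟩
          exact h (by simpa using hv) (by simpa using hw) (by simp) hadj
      · rintro ⟨h1, h2⟩ x hx y hy hxy
        match x, y with
        | Sum.inl u, Sum.inl v =>
          exact h1 (by simpa using hx) (by simpa using hy) (by simpa using hxy)
        | Sum.inl u, Sum.inr w =>
          have hw := h2 (by simpa using hy)
          rw [hT, Finset.mem_filter] at hw
          exact hw.2 u (by simpa using hx)
        | Sum.inr w, Sum.inl u =>
          have hw := h2 (by simpa using hx)
          rw [hT, Finset.mem_filter] at hw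
          exact fun hadj => hw.2 u (by simpa using hy) hadj.symm
        | Sum.inr w, Sum.inr w' => exact hno w w'
    by_cases hP : (a : Set α).Pairwise (fun u v => ¬ H.Adj (.inl u) (.inl v))
    · rw [if_pos hP]
      have step1 : ∀ b : Finset β,
          (if ((a.disjSum b : Finset (α ⊕ β)) : Set (α ⊕ β)).Pairwise (fun u v => ¬H.Adj u v)
              then (X : Polynomial ℤ) ^ (a.disjSum b).card else 0)
            = (X : Polynomial ℤ) ^ a.card * if b ⊆ T then X ^ b.card else 0 := by
        intro b
        by_cases hb : b ⊆ T
        · rw [if_pos ((key b).2 ⟨hP, hb⟩), if_pos hb, Finset.card_disjSum, pow_add]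
        · rw [if_neg (fun h => hb ((key b).1 h).2), if_neg hb, mul_zero]
      rw [Finset.sum_congr rfl fun b _ => step1 b, ← Finset.mul_sum, sum_pow_subset]
    · rw [if_neg hP]
      refine Finset.sum_eq_zero fun b _ => ?_
      exact if_neg (fun h => hP ((key b).1 h).1)
  refine Eq.trans ?_ main
  unfold indepPoly
  refine Finset.sum_congr rfl fun s _ => ?_
  congr 1

open Finset in
private lemma comp_count1 {V : Type*} [DecidableEq V] (a : Finset V) (c : ZMod 1 → V) :
    (Finset.univ.filter fun j : Fin (max 1 2) =>
        c ((j : ℕ) : ZMod 1) ∉ a ∧ c (((j : ℕ) : ZMod 1) + 1) ∉ a).card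
      + 2 * (Finset.univ.filter fun j : ZMod 1 => c j ∈ a).card
      = 1 + (if (1 : ℕ) = 1 then 1 else 0) := by
  have hconst : ∀ j : Fin (max 1 2),
      ((c ((j : ℕ) : ZMod 1) ∉ a ∧ c (((j : ℕ) : ZMod 1) + 1) ∉ a) ↔ c 0 ∉ a) := by
    intro j
    rw [Subsingleton.elim (((j : ℕ) : ZMod 1)) 0, Subsingleton.elim ((0 : ZMod 1) + 1) 0]
    tauto
  have hconst2 : ∀ j : ZMod 1, (c j ∈ a ↔ c 0 ∈ a) := by
    intro j; rw [Subsingleton.elim j 0]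
  by_cases hc : c 0 ∈ a
  · rw [Finset.filter_false_of_mem (fun x _ => fun h => ((hconst x).1 h) hc),
      Finset.filter_true_of_mem (fun x _ => (hconst2 x).2 hc)]
    simp
  · rw [Finset.filter_true_of_mem (fun x _ => (hconst x).2 hc),
      Finset.filter_false_of_mem (fun x _ => fun h => hc ((hconst2 x).1 h))]
    simp

open Finset in
private lemma comp_count2 {V : Type*} [DecidableEq V] (a : Finset V) (c : ZMod 2 → V)
    (h2 : ¬(c 0 ∈ a ∧ c 1 ∈ a)) :
    (Finset.univ.filter fun j : Fin (max 2 2) =>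
        c ((j : ℕ) : ZMod 2) ∉ a ∧ c (((j : ℕ) : ZMod 2) + 1) ∉ a).card
      + 2 * (Finset.univ.filter fun j : ZMod 2 => c j ∈ a).card
      = 2 + (if (2 : ℕ) = 1 then 1 else 0) := by
  have hx : ∀ x : ZMod 2, x = 0 ∨ x = 1 := by decide
  have hconst : ∀ j : Fin (max 2 2),
      ((c ((j : ℕ) : ZMod 2) ∉ a ∧ c (((j : ℕ) : ZMod 2) + 1) ∉ a) ↔
        (c 0 ∉ a ∧ c 1 ∉ a)) := by
    intro j
    rcases hx (((j : ℕ) : ZMod 2)) with h | h <;> rw [h]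
    · norm_num
    · rw [show (1 : ZMod 2) + 1 = 0 by decide]
      tauto
  by_cases h0 : c 0 ∈ a <;> by_cases h1 : c 1 ∈ a
  · exact absurd ⟨h0, h1⟩ h2
  · rw [Finset.filter_false_of_mem (fun x _ => fun h => ((hconst x).1 h).1 h0)]
    have he : (Finset.univ.filter fun j : ZMod 2 => c j ∈ a) = {0} := by
      ext x
      simp only [Finset.mem_filter, Finset.mem_univ, true_and, Finset.mem_singleton]
      constructor
      · intro hm
        rcases hx x with h | h
        · exact h
        · exact absurd (h ▸ hm) h1
      · intro h; rw [h]; exact h0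
    rw [he]
    simp
  · rw [Finset.filter_false_of_mem (fun x _ => fun h => ((hconst x).1 h).2 h1)]
    have he : (Finset.univ.filter fun j : ZMod 2 => c j ∈ a) = {1} := by
      ext x
      simp only [Finset.mem_filter, Finset.mem_univ, true_and, Finset.mem_singleton]
      constructor
      · intro hm
        rcases hx x with h | h
        · exact absurd (h ▸ hm) h0
        · exact h
      · intro h; rw [h]; exact h1
    rw [he]
    simp
  · rw [Finset.filter_true_of_mem (fun x _ => (hconst x).2 ⟨h0, h1⟩),
      Finset.filter_false_of_mem (fun x _ => fun h => by
        rcases hx x with hh | hh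
        · exact h0 (hh ▸ h)
        · exact h1 (hh ▸ h))]
    simp

open Finset in
private lemma comp_count3 {V : Type*} [DecidableEq V] (a : Finset V) (m : ℕ)
    (c : ZMod (m + 3) → V)
    (h3 : ∀ j : ZMod (m + 3), ¬(c j ∈ a ∧ c (j + 1) ∈ a)) :
    (Finset.univ.filter fun j : Fin (max (m + 3) 2) =>
        c ((j : ℕ) : ZMod (m + 3)) ∉ a ∧ c (((j : ℕ) : ZMod (m + 3)) + 1) ∉ a).card
      + 2 * (Finset.univ.filter fun j : ZMod (m + 3) => c j ∈ a).card
      = (m + 3) + (if m + 3 = 1 then 1 else 0) := by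
  haveI : NeZero (m+3) := ⟨by omega⟩
  have hmax : max (m+3) 2 = m+3 := by omega
  have htrans : (Finset.univ.filter fun j : Fin (max (m+3) 2) =>
      c ((j : ℕ) : ZMod (m+3)) ∉ a ∧ c (((j : ℕ) : ZMod (m+3)) + 1) ∉ a).card
      = (Finset.univ.filter fun x : ZMod (m+3) => c x ∉ a ∧ c (x + 1) ∉ a).card := by
    refine Finset.card_bij (fun j _ => ((j : ℕ) : ZMod (m+3))) ?_ ?_ ?_
    · intro j hj
      simp only [Finset.mem_filter, Finset.mem_univ, true_and] at hj ⊢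
      exact hj
    · intro i _ j _ h
      have hi : (i : ℕ) < m + 3 := by have := i.isLt; omega
      have hj : (j : ℕ) < m + 3 := by have := j.isLt; omega
      have := congrArg ZMod.val h
      rw [ZMod.val_cast_of_lt hi, ZMod.val_cast_of_lt hj] at this
      exact Fin.ext this
    · intro x hx
      simp only [Finset.mem_filter, Finset.mem_univ, true_and] at hx
      have hxx : (((⟨x.val, by rw [hmax]; exact x.val_lt⟩ : Fin (max (m+3) 2)) : ℕ)
          : ZMod (m+3)) = x := ZMod.natCast_rightInverse x
      refine ⟨⟨x.val, by rw [hmax]; exact x.val_lt⟩,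
        Finset.mem_filter.2 ⟨Finset.mem_univ _, ?_⟩, hxx⟩
      rw [hxx]
      exact hx
  rw [htrans]
  set A := Finset.univ.filter fun j : ZMod (m+3) => c j ∈ a with hA
  set B := Finset.univ.filter fun j : ZMod (m+3) => c (j + 1) ∈ a with hB
  have hdisj : Disjoint A B := by
    rw [Finset.disjoint_left]
    intro x hx hx'
    rw [hA, Finset.mem_filter] at hx
    rw [hB, Finset.mem_filter] at hx'
    exact h3 x ⟨hx.2, hx'.2⟩
  have hBA : B.card = A.card := by
    refine Finset.card_bij (fun x _ => x + 1) ?_ ?_ ?_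
    · intro x hx
      rw [hB, Finset.mem_filter] at hx
      rw [hA, Finset.mem_filter]
      exact ⟨Finset.mem_univ _, hx.2⟩
    · intro i _ j _ h
      exact add_right_cancel h
    · intro x hx
      rw [hA, Finset.mem_filter] at hx
      refine ⟨x - 1, ?_, by ring⟩
      rw [hB, Finset.mem_filter]
      refine ⟨Finset.mem_univ _, ?_⟩
      rw [sub_add_cancel]
      exact hx.2
  have hcompl : (Finset.univ.filter fun x : ZMod (m+3) => c x ∉ a ∧ c (x + 1) ∉ a)
      = (A ∪ B)ᶜ := by
    ext x
    simp only [Finset.mem_filter, Finset.mem_univ, true_and, Finset.mem_compl,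
      Finset.mem_union, hA, hB]
    push_neg
    tauto
  have hcardU : (A ∪ B).card ≤ m + 3 := by
    calc (A ∪ B).card ≤ Finset.univ.card := Finset.card_le_univ _
      _ = m + 3 := by rw [Finset.card_univ, ZMod.card]
  rw [hcompl, Finset.card_compl, Finset.card_union_of_disjoint hdisj, hBA, ZMod.card,
    if_neg (show ¬ (m + 3 = 1) by omega)]
  have h2e : A.card + B.card ≤ m + 3 := by
    rw [← Finset.card_union_of_disjoint hdisj]
    exact hcardU
  omega

open Finset in
private lemma comp_count {V : Type*} [DecidableEq V] (a : Finset V) (s : ℕ) [NeZero s]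
    (c : ZMod s → V)
    (h2 : s = 2 → ¬(c 0 ∈ a ∧ c 1 ∈ a))
    (h3 : 3 ≤ s → ∀ j : ZMod s, ¬(c j ∈ a ∧ c (j + 1) ∈ a)) :
    (Finset.univ.filter fun j : Fin (max s 2) =>
        c ((j : ℕ) : ZMod s) ∉ a ∧ c (((j : ℕ) : ZMod s) + 1) ∉ a).card
      + 2 * (Finset.univ.filter fun j : ZMod s => c j ∈ a).card
      = s + (if s = 1 then 1 else 0) := by
  rcases s with _ | _ | _ | m
  · exact absurd rfl (NeZero.ne 0)
  · exact comp_count1 a c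
  · exact comp_count2 a c (h2 rfl)
  · exact comp_count3 a m c (h3 (by omega))

theorem cycleCover_factorization {ι V : Type*} [Fintype ι] [Fintype V]
    (G : SimpleGraph V) (cc : CycleCover ι G) :
    indepPoly (corona G (⊥ : SimpleGraph (Fin 2))) =
      (1 + X) ^ (Fintype.card V - (Finset.univ.filter fun i => cc.size i = 1).card) *
        indepPoly (gammaGraph G cc) := by
  classical
  haveI : ∀ i, NeZero (cc.size i) := fun i => ⟨(cc.pos i).ne'⟩
  set n := Fintype.card V with hn0
  set k := (Finset.univ.filter fun i => cc.size i = 1).card with hk0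
  -- global count facts
  have hn : n = ∑ i, cc.size i := by
    rw [hn0, ← Fintype.card_congr (Equiv.ofBijective _ cc.bij), Fintype.card_sigma]
    refine Finset.sum_congr rfl fun i _ => ?_
    haveI : NeZero (cc.size i) := ⟨(cc.pos i).ne'⟩
    exact ZMod.card _
  have hk : k = ∑ i, (if cc.size i = 1 then 1 else 0) := by
    rw [hk0, Finset.card_filter]
  have hk_le : k ≤ n := by
    rw [hk, hn]
    refine Finset.sum_le_sum fun i _ => ?_
    split_ifs with h
    · omega
    · exact Nat.zero_le _
  rw [indepPoly_split (corona G (⊥ : SimpleGraph (Fin 2)))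
      (by rintro ⟨w, j⟩ ⟨w', j'⟩ h; exact h.2),
    indepPoly_split (gammaGraph G cc) (by rintro ⟨i, j⟩ ⟨i', j'⟩ h; exact h),
    Finset.mul_sum]
  refine Finset.sum_congr rfl fun a _ => ?_
  have ha_le : a.card ≤ n := by
    rw [hn0]; exact (Finset.card_le_univ a).trans_eq Finset.card_univ
  by_cases hP : (a : Set V).Pairwise (fun u v => ¬ G.Adj u v)
  · rw [if_pos (show (a : Set V).Pairwise (fun u v =>
        ¬ (corona G (⊥ : SimpleGraph (Fin 2))).Adj (.inl u) (.inl v)) from hP),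
      if_pos (show (a : Set V).Pairwise (fun u v =>
        ¬ (gammaGraph G cc).Adj (.inl u) (.inl v)) from hP)]
    -- corona count
    have hc1 : (Finset.univ.filter fun w : V × Fin 2 =>
        ∀ v ∈ a, ¬ (corona G (⊥ : SimpleGraph (Fin 2))).Adj (.inl v) (.inr w))
        = aᶜ ×ˢ (Finset.univ : Finset (Fin 2)) := by
      ext ⟨u, j⟩
      simp only [Finset.mem_filter, Finset.mem_univ, true_and, Finset.mem_product,
        Finset.mem_compl, and_true]
      constructor
      · intro h hu
        exact h u hu rfl
      · intro hu v hv hadj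
        have : v = u := hadj
        exact hu (this ▸ hv)
    have hc2 : (Finset.univ.filter fun w : V × Fin 2 =>
        ∀ v ∈ a, ¬ (corona G (⊥ : SimpleGraph (Fin 2))).Adj (.inl v) (.inr w)).card
        = 2 * (n - a.card) := by
      rw [hc1, Finset.card_product, Finset.card_compl, Finset.card_univ, Fintype.card_fin]
      rw [hn0]
      ring
    -- gamma count
    have hg1 : (Finset.univ.filter fun w : Σ i, Fin (max (cc.size i) 2) =>
        ∀ v ∈ a, ¬ (gammaGraph G cc).Adj (.inl v) (.inr w))
        = (Finset.univ.filter fun w : Σ i, Fin (max (cc.size i) 2) =>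
            cc.c w.1 ((w.2 : ℕ) : ZMod (cc.size w.1)) ∉ a ∧
              cc.c w.1 (((w.2 : ℕ) : ZMod (cc.size w.1)) + 1) ∉ a) := by
      refine Finset.filter_congr fun w _ => ?_
      obtain ⟨i, j⟩ := w
      constructor
      · intro h
        constructor
        · intro hm
          exact h _ hm (Or.inl rfl)
        · intro hm
          exact h _ hm (Or.inr rfl)
      · rintro ⟨hm1, hm2⟩ v hv hadj
        have : v = cc.c i ((j : ℕ) : ZMod (cc.size i)) ∨
            v = cc.c i (((j : ℕ) : ZMod (cc.size i)) + 1) := hadj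
        rcases this with h | h
        · exact hm1 (h ▸ hv)
        · exact hm2 (h ▸ hv)
    -- per-component hypotheses
    have hcomp : ∀ i : ι,
        (Finset.univ.filter fun j : Fin (max (cc.size i) 2) =>
            cc.c i ((j : ℕ) : ZMod (cc.size i)) ∉ a ∧
              cc.c i (((j : ℕ) : ZMod (cc.size i)) + 1) ∉ a).card
          + 2 * (Finset.univ.filter fun j : ZMod (cc.size i) => cc.c i j ∈ a).card
          = cc.size i + (if cc.size i = 1 then 1 else 0) := by
      intro i
      refine comp_count a (cc.size i) (cc.c i) ?_ ?_
      · rintro hs ⟨m0, m1⟩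
        have hadj := cc.adj_edge i hs
        exact hP m0 m1 hadj.ne hadj
      · rintro hs j ⟨m0, m1⟩
        have hadj := cc.adj_cycle i hs j
        exact hP m0 m1 hadj.ne hadj
    have hacard : a.card = ∑ i, (Finset.univ.filter fun j : ZMod (cc.size i) =>
        cc.c i j ∈ a).card := by
      rw [← card_filter_sigma (fun p : Σ i, ZMod (cc.size i) => cc.c p.1 p.2 ∈ a)]
      symm
      refine Finset.card_bij (fun p _ => cc.c p.1 p.2) ?_ ?_ ?_
      · intro p hp
        rw [Finset.mem_filter] at hp
        exact hp.2
      · intro p _ q _ h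
        exact cc.bij.1 h
      · intro v hv
        obtain ⟨p, hp⟩ := cc.bij.2 v
        have hp' : cc.c p.1 p.2 = v := hp
        exact ⟨p, Finset.mem_filter.2 ⟨Finset.mem_univ _, hp'.symm ▸ hv⟩, hp'⟩
    have hNg : (Finset.univ.filter fun w : Σ i, Fin (max (cc.size i) 2) =>
            cc.c w.1 ((w.2 : ℕ) : ZMod (cc.size w.1)) ∉ a ∧
              cc.c w.1 (((w.2 : ℕ) : ZMod (cc.size w.1)) + 1) ∉ a).card
        + 2 * a.card = n + k := by
      rw [card_filter_sigma (fun w : Σ i, Fin (max (cc.size i) 2) =>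
            cc.c w.1 ((w.2 : ℕ) : ZMod (cc.size w.1)) ∉ a ∧
              cc.c w.1 (((w.2 : ℕ) : ZMod (cc.size w.1)) + 1) ∉ a),
        hacard, hn, hk, Finset.mul_sum, ← Finset.sum_add_distrib, ← Finset.sum_add_distrib]
      exact Finset.sum_congr rfl fun i _ => hcomp i
    rw [hc2, hg1]
    set N := (Finset.univ.filter fun w : Σ i, Fin (max (cc.size i) 2) =>
            cc.c w.1 ((w.2 : ℕ) : ZMod (cc.size w.1)) ∉ a ∧
              cc.c w.1 (((w.2 : ℕ) : ZMod (cc.size w.1)) + 1) ∉ a).card with hNdef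
    have hexp : 2 * (n - a.card) = (n - k) + N := by omega
    rw [hexp, pow_add]
    ring
  · rw [if_neg (show ¬ (a : Set V).Pairwise (fun u v =>
        ¬ (corona G (⊥ : SimpleGraph (Fin 2))).Adj (.inl u) (.inl v)) from hP),
      if_neg (show ¬ (a : Set V).Pairwise (fun u v =>
        ¬ (gammaGraph G cc).Adj (.inl u) (.inl v)) from hP), mul_zero]
end
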